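/- arXiv:1111.7284 — 5 statements merged into one kernel-verified Lean document; each statement's English description precedes it below -/
import Mathlib

section
/- If 𝔊 is an induced Hoffman subgraph of a Hoffman graph 𝔥, then λ_min(𝔊) ≥ λ_min(𝔥). In particular, if Γ is the slim subgraph of 𝔥 (the subgraph induced on the slim vertices, regarded as a slim Hoffman graph, so that its B-matrix is its ordinary adjacency matrix), then the smallest adjacency eigenvalue of Γ is at least λ_min(𝔥). -/
/-- A Hoffman graph: a finite simple graph whose vertices are labeled slim or fat,
such that fat vertices are pairwise non-adjacent and every fat vertex is adjacent
to at least one slim vertex. -/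
structure HoffmanGraph (V : Type*) where
  adj : V → V → Prop
  symm : ∀ {x y : V}, adj x y → adj y x
  loopless : ∀ x : V, ¬ adj x x
  fat : V → Prop
  fat_slim : ∀ x : V, fat x → ∃ y : V, adj x y ∧ ¬ fat y
  fat_nonadj : ∀ x y : V, fat x → fat y → ¬ adj x y

/-- The smallest eigenvalue of a real matrix (the infimum of its set of real
eigenvalues); for a real symmetric matrix on a nonempty finite index type this is
the least eigenvalue. -/
noncomputable def minEig {n : Type*} [Fintype n] (M : Matrix n n ℝ) : ℝ :=
  sInf {t : ℝ | ∃ v : n → ℝ, v ≠ 0 ∧ M.mulVec v = t • v}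

namespace HoffmanGraph

variable {V : Type*}

/-- The type of slim vertices. -/
abbrev Slim (H : HoffmanGraph V) : Type _ := {x : V // ¬ H.fat x}

/-- The type of fat vertices. -/
abbrev FatV (H : HoffmanGraph V) : Type _ := {x : V // H.fat x}

noncomputable instance (priority := 50) instFintypeSlim [Finite V] {H : HoffmanGraph V} :
    Fintype H.Slim := Fintype.ofFinite _

noncomputable instance (priority := 50) instFintypeFatV [Finite V] {H : HoffmanGraph V} :
    Fintype H.FatV := Fintype.ofFinite _

/-- The set of fat neighbors `N^f(x)` of a vertex. -/
def fatNbrs (H : HoffmanGraph V) (x : V) : Set V := {f | H.fat f ∧ H.adj x f}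

/-- The set of common fat neighbors `N^f(x) ∩ N^f(y)` of two vertices. -/
def commonFat (H : HoffmanGraph V) (x y : V) : Set V :=
  {f | H.fat f ∧ H.adj x f ∧ H.adj y f}

lemma commonFat_comm (H : HoffmanGraph V) (x y : V) :
    H.commonFat x y = H.commonFat y x := by
  ext f; simp only [commonFat, Set.mem_setOf_eq]; tauto

/-- The degree of a vertex. -/
noncomputable def degree (H : HoffmanGraph V) (x : V) : ℕ := {y | H.adj x y}.ncard

/-- The matrix `B(𝔥) = A_s - C Cᵀ`, written entrywise:
`B x y = A_s x y - |N^f(x) ∩ N^f(y)|`. -/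
noncomputable def B (H : HoffmanGraph V) : Matrix H.Slim H.Slim ℝ := by
  classical
  exact Matrix.of fun x y =>
    (if H.adj x.1 y.1 then (1 : ℝ) else 0) - ((H.commonFat x.1 y.1).ncard : ℝ)

/-- `λ_min(𝔥)`: the smallest eigenvalue of `B(𝔥)`. -/
noncomputable def lamMin [Finite V] (H : HoffmanGraph V) : ℝ := minEig H.B

/-- The adjacency matrix of the slim subgraph of `𝔥` (equivalently, the `B`-matrix
of the slim subgraph regarded as a slim Hoffman graph). -/
noncomputable def slimAdjMatrix (H : HoffmanGraph V) : Matrix H.Slim H.Slim ℝ := by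
  classical
  exact Matrix.of fun x y => if H.adj x.1 y.1 then (1 : ℝ) else 0

/-- A Hoffman graph is fat if every slim vertex has a fat neighbor. -/
def IsFat (H : HoffmanGraph V) : Prop :=
  ∀ x : V, ¬ H.fat x → ∃ f : V, H.fat f ∧ H.adj x f

end HoffmanGraph

/-- An embedding exhibiting `G` as an induced Hoffman subgraph of `H`:
an injection preserving adjacency, non-adjacency, and the slim/fat labeling. -/
structure HoffmanEmbedding {V W : Type*} (G : HoffmanGraph V) (H : HoffmanGraph W) where
  toFun : V → W
  inj : Function.Injective toFun
  adj_iff : ∀ x y : V, G.adj x y ↔ H.adj (toFun x) (toFun y)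
  fat_iff : ∀ x : V, G.fat x ↔ H.fat (toFun x)

/-- An isomorphism of Hoffman graphs. -/
structure HoffmanIso {V W : Type*} (G : HoffmanGraph V) (H : HoffmanGraph W) where
  toEquiv : V ≃ W
  adj_iff : ∀ x y : V, G.adj x y ↔ H.adj (toEquiv x) (toEquiv y)
  fat_iff : ∀ x : V, G.fat x ↔ H.fat (toEquiv x)

namespace HoffmanGraph

variable {V : Type*}

/-- The induced Hoffman subgraph on a set `W` of vertices, provided every fat
vertex of `W` keeps a slim neighbor inside `W`. -/
def induce (H : HoffmanGraph V) (W : Finset V)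
    (hW : ∀ y ∈ W, H.fat y → ∃ x ∈ W, ¬ H.fat x ∧ H.adj y x) :
    HoffmanGraph {v : V // v ∈ W} where
  adj x y := H.adj x.1 y.1
  symm := @fun x y h => H.symm h
  loopless x h := H.loopless x.1 h
  fat x := H.fat x.1
  fat_slim x hx := by
    obtain ⟨z, hzW, hz1, hz2⟩ := hW x.1 x.2 hx
    exact ⟨⟨z, hzW⟩, hz2, hz1⟩
  fat_nonadj x y hx hy := H.fat_nonadj x.1 y.1 hx hy

/-- A decomposition of a Hoffman graph `H` into the family of induced Hoffman
subgraphs on the (nonempty) vertex sets `W i`. -/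
structure IsDecomposition (H : HoffmanGraph V) {ι : Type*} (W : ι → Finset V) : Prop where
  nonempty : ∀ i, (W i).Nonempty
  cover : ∀ v : V, ∃ i, v ∈ W i
  slim_disj : ∀ i j, i ≠ j → ∀ x : V, ¬ H.fat x → x ∈ W i → x ∈ W j → False
  fat_closed : ∀ i, ∀ x y : V, x ∈ W i → ¬ H.fat x → H.fat y → H.adj x y → y ∈ W i
  part_fat : ∀ i, ∀ y ∈ W i, H.fat y → ∃ x ∈ W i, ¬ H.fat x ∧ H.adj y x
  cross : ∀ i j, i ≠ j → ∀ x y : V, x ∈ W i → y ∈ W j → ¬ H.fat x → ¬ H.fat y →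
    (H.commonFat x y).ncard ≤ 1 ∧ ((H.commonFat x y).ncard = 1 ↔ H.adj x y)

/-- A Hoffman graph is decomposable if it admits a decomposition into `n ≥ 2` parts. -/
def Decomposable (H : HoffmanGraph V) : Prop :=
  ∃ n : ℕ, 2 ≤ n ∧ ∃ W : Fin n → Finset V, H.IsDecomposition W

/-- `α`-reducibility: `λ_min(H) ≥ α` and there is a Hoffman graph `H'` containing `H`
as an induced Hoffman subgraph together with a decomposition `{𝔥¹, 𝔥²}` of `H'` whose
parts have smallest eigenvalue at least `α` and whose slim vertex sets both meet the
slim vertex set of `H`. -/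
def AlphaReducible [Finite V] (H : HoffmanGraph V) (α : ℝ) : Prop :=
  H.lamMin ≥ α ∧
  ∃ (V' : Type) (_ : Finite V') (H' : HoffmanGraph V') (e : HoffmanEmbedding H H')
    (W : Fin 2 → Finset V') (hD : H'.IsDecomposition W),
    (∀ i, (H'.induce (W i) (hD.part_fat i)).lamMin ≥ α) ∧
    (∀ i, ∃ v : V, ¬ H.fat v ∧ e.toFun v ∈ W i)

/-- `α`-irreducibility: `λ_min(H) ≥ α` and `H` is not `α`-reducible. -/
def AlphaIrreducible [Finite V] (H : HoffmanGraph V) (α : ℝ) : Prop :=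
  H.lamMin ≥ α ∧ ¬ H.AlphaReducible α

end HoffmanGraph

/-- An edge-signed graph: a simple graph whose edge set is partitioned into
`(+)`-edges and `(−)`-edges. -/
structure EdgeSignedGraph (V : Type*) where
  pos : V → V → Prop
  neg : V → V → Prop
  pos_symm : ∀ {x y : V}, pos x y → pos y x
  neg_symm : ∀ {x y : V}, neg x y → neg y x
  pos_irrefl : ∀ x : V, ¬ pos x x
  neg_irrefl : ∀ x : V, ¬ neg x x
  pos_neg : ∀ x y : V, pos x y → neg x y → False

namespace EdgeSignedGraph

variable {V : Type*}

/-- The signed adjacency matrix: `1` on `(+)`-edges, `−1` on `(−)`-edges, `0` otherwise. -/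
noncomputable def M (S : EdgeSignedGraph V) : Matrix V V ℝ := by
  classical
  exact Matrix.of fun x y => if S.pos x y then (1 : ℝ) else if S.neg x y then -1 else 0

/-- The underlying simple graph of an edge-signed graph. -/
def toSimpleGraph (S : EdgeSignedGraph V) : SimpleGraph V where
  Adj x y := S.pos x y ∨ S.neg x y
  symm := ⟨fun x y h => h.elim (fun h => Or.inl (S.pos_symm h)) (fun h => Or.inr (S.neg_symm h))⟩
  loopless := ⟨fun x h => h.elim (S.pos_irrefl x) (S.neg_irrefl x)⟩

/-- `S.HasInduced T`: the edge-signed graph `S` contains an induced edge-signed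
subgraph isomorphic to `T`. -/
def HasInduced {W : Type*} (S : EdgeSignedGraph V) (T : EdgeSignedGraph W) : Prop :=
  ∃ f : W → V, Function.Injective f ∧
    (∀ x y : W, T.pos x y ↔ S.pos (f x) (f y)) ∧
    (∀ x y : W, T.neg x y ↔ S.neg (f x) (f y))

end EdgeSignedGraph

/-- An isomorphism of edge-signed graphs. -/
structure EdgeSignedIso {V W : Type*} (S : EdgeSignedGraph V) (T : EdgeSignedGraph W) where
  toEquiv : V ≃ W
  pos_iff : ∀ x y : V, S.pos x y ↔ T.pos (toEquiv x) (toEquiv y)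
  neg_iff : ∀ x y : V, S.neg x y ↔ T.neg (toEquiv x) (toEquiv y)

/-- The special graph `S(𝔥)` of a Hoffman graph: the edge-signed graph on the slim
vertices where adjacent vertices with no common fat neighbor form a `(+)`-edge, and
non-adjacent vertices with a common fat neighbor form a `(−)`-edge. -/
def HoffmanGraph.special {V : Type*} (H : HoffmanGraph V) : EdgeSignedGraph H.Slim where
  pos x y := H.adj x.1 y.1 ∧ H.commonFat x.1 y.1 = ∅
  neg x y := x ≠ y ∧ ¬ H.adj x.1 y.1 ∧ (H.commonFat x.1 y.1).Nonempty
  pos_symm := @fun x y h => ⟨H.symm h.1, by rw [H.commonFat_comm]; exact h.2⟩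
  neg_symm := @fun x y h =>
    ⟨h.1.symm, fun ha => h.2.1 (H.symm ha), by rw [H.commonFat_comm]; exact h.2.2⟩
  pos_irrefl x h := H.loopless x.1 h.1
  neg_irrefl x h := h.1 rfl
  pos_neg x y hp hn := hn.2.1 hp.1

/-- The edge-signed graph `Q_{p,q,r}`: a `(+)`-clique `V_r = Fin r`, a set
`V_p = Fin p` matched by `(+)`-edges to the first `p` vertices of `V_r`, and a set
`V_q = Fin q` matched by `(−)`-edges to the next `q` vertices of `V_r`. -/
def Q (p q r : ℕ) : EdgeSignedGraph (Fin p ⊕ Fin q ⊕ Fin r) where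
  pos x y :=
    (∃ (i : Fin p) (k : Fin r), x = Sum.inl i ∧ y = Sum.inr (Sum.inr k) ∧ (k : ℕ) = (i : ℕ)) ∨
    (∃ (i : Fin p) (k : Fin r), y = Sum.inl i ∧ x = Sum.inr (Sum.inr k) ∧ (k : ℕ) = (i : ℕ)) ∨
    (∃ (k l : Fin r), x = Sum.inr (Sum.inr k) ∧ y = Sum.inr (Sum.inr l) ∧ k ≠ l)
  neg x y :=
    (∃ (j : Fin q) (k : Fin r),
      x = Sum.inr (Sum.inl j) ∧ y = Sum.inr (Sum.inr k) ∧ (k : ℕ) = p + (j : ℕ)) ∨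
    (∃ (j : Fin q) (k : Fin r),
      y = Sum.inr (Sum.inl j) ∧ x = Sum.inr (Sum.inr k) ∧ (k : ℕ) = p + (j : ℕ))
  pos_symm := @fun x y h => by
    rcases h with ⟨i, k, h1, h2, h3⟩ | ⟨i, k, h1, h2, h3⟩ | ⟨k, l, h1, h2, h3⟩
    · exact Or.inr (Or.inl ⟨i, k, h1, h2, h3⟩)
    · exact Or.inl ⟨i, k, h1, h2, h3⟩
    · exact Or.inr (Or.inr ⟨l, k, h2, h1, h3.symm⟩)
  neg_symm := @fun x y h => by
    rcases h with ⟨j, k, h1, h2, h3⟩ | ⟨j, k, h1, h2, h3⟩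
    · exact Or.inr ⟨j, k, h1, h2, h3⟩
    · exact Or.inl ⟨j, k, h1, h2, h3⟩
  pos_irrefl x h := by
    rcases h with ⟨i, k, h1, h2, h3⟩ | ⟨i, k, h1, h2, h3⟩ | ⟨k, l, h1, h2, h3⟩ <;>
      subst h1 <;> simp_all
  neg_irrefl x h := by
    rcases h with ⟨j, k, h1, h2, h3⟩ | ⟨j, k, h1, h2, h3⟩ <;> subst h1 <;> simp_all
  pos_neg x y hp hn := by
    rcases hp with ⟨i, k, h1, h2, h3⟩ | ⟨i, k, h1, h2, h3⟩ | ⟨k, l, h1, h2, h3⟩ <;>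
      rcases hn with ⟨j, m, g1, g2, g3⟩ | ⟨j, m, g1, g2, g3⟩ <;> subst h1 <;> simp_all

/-- The edge-signed triangle `T₁` with exactly one `(+)`-edge and two `(−)`-edges. -/
def T1 : EdgeSignedGraph (Fin 3) where
  pos x y := (x = 0 ∧ y = 1) ∨ (x = 1 ∧ y = 0)
  neg x y := x ≠ y ∧ (x = 2 ∨ y = 2)
  pos_symm := @fun x y h => by tauto
  neg_symm := @fun x y h => ⟨h.1.symm, h.2.symm⟩
  pos_irrefl x h := by
    rcases h with ⟨h1, h2⟩ | ⟨h1, h2⟩ <;> subst h1 <;> exact absurd h2 (by decide)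
  neg_irrefl x h := h.1 rfl
  pos_neg x y hp hn := by
    rcases hp with ⟨h1, h2⟩ | ⟨h1, h2⟩ <;> subst h1 <;> subst h2 <;>
      exact absurd hn.2 (by decide)

/-- The golden ratio `τ = (1 + √5)/2`. -/
noncomputable def goldenRatio' : ℝ := (1 + Real.sqrt 5) / 2

section AuxEig

open Matrix Finset

private lemma dotProduct_self_pos' {n : Type*} [Fintype n] {v : n → ℝ} (hv : v ≠ 0) :
    0 < v ⬝ᵥ v := by
  obtain ⟨i, hi⟩ := Function.ne_iff.mp hv
  exact Finset.sum_pos' (fun j _ => mul_self_nonneg _)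
    ⟨i, Finset.mem_univ i, mul_self_pos.mpr hi⟩

private lemma herm_min {n : Type*} [Fintype n] [Nonempty n] {M : Matrix n n ℝ}
    (hM : M.IsHermitian) :
    ∃ c : ℝ, (∃ v : n → ℝ, v ≠ 0 ∧ M.mulVec v = c • v) ∧
      ∀ w : n → ℝ, c * (w ⬝ᵥ w) ≤ w ⬝ᵥ M.mulVec w := by
  classical
  obtain ⟨i, -, hmin⟩ := Finset.exists_min_image Finset.univ hM.eigenvalues
    ⟨Classical.arbitrary n, Finset.mem_univ _⟩
  set c := hM.eigenvalues i with hc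
  refine ⟨c, ⟨hM.eigenvectorBasis i, (WithLp.ofLp_eq_zero 2).not.mpr (hM.eigenvectorBasis.orthonormal.ne_zero i),
    hM.mulVec_eigenvectorBasis i⟩, ?_⟩
  intro w
  set U : Matrix n n ℝ := (hM.eigenvectorUnitary : Matrix n n ℝ) with hU
  have hUU : U * star U = 1 := (Matrix.mem_unitaryGroup_iff).mp hM.eigenvectorUnitary.2
  have hdiag : Matrix.diagonal (RCLike.ofReal ∘ hM.eigenvalues) - c • (1 : Matrix n n ℝ)
      = Matrix.diagonal (fun j => hM.eigenvalues j - c) := by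
    ext j k
    by_cases h : j = k
    · subst h
      simp [Matrix.diagonal_apply_eq, Matrix.one_apply_eq]
    · simp [Matrix.diagonal_apply_ne _ h, Matrix.one_apply_ne h]
  have h2 : U * Matrix.diagonal (fun j => hM.eigenvalues j - c) * star U
      = M - c • (1 : Matrix n n ℝ) := by
    rw [← hdiag]
    calc U * (Matrix.diagonal (RCLike.ofReal ∘ hM.eigenvalues) - c • 1) * star U
        = U * Matrix.diagonal (RCLike.ofReal ∘ hM.eigenvalues) * star U
            - U * (c • 1) * star U := by
          rw [Matrix.mul_sub, Matrix.sub_mul]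
      _ = M - c • (1 : Matrix n n ℝ) := by
          have hs := hM.spectral_theorem
          rw [Unitary.conjStarAlgAut_apply, ← hU] at hs
          rw [← hs, Matrix.mul_smul, Matrix.mul_one, Matrix.smul_mul, hUU]
  have hps : (M - c • (1 : Matrix n n ℝ)).PosSemidef := by
    rw [← h2, Matrix.star_eq_conjTranspose]
    exact (Matrix.posSemidef_diagonal_iff.mpr
      (fun j => sub_nonneg.mpr (hmin j (Finset.mem_univ j)))).mul_mul_conjTranspose_same U
  have h3 := hps.dotProduct_mulVec_nonneg w
  have h4 : (M - c • (1 : Matrix n n ℝ)) *ᵥ w = M *ᵥ w - c • w := by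
    rw [Matrix.sub_mulVec, Matrix.smul_mulVec, Matrix.one_mulVec]
  rw [h4, star_trivial, dotProduct_sub, dotProduct_smul, smul_eq_mul] at h3
  linarith

private lemma minEig_mono' {m n : Type*} [Fintype m] [Fintype n] [Nonempty m]
    {M : Matrix m m ℝ} {N : Matrix n n ℝ} (hM : M.IsHermitian) (hN : N.IsHermitian)
    (h : ∀ v : m → ℝ, v ≠ 0 → ∃ w : n → ℝ, w ≠ 0 ∧ w ⬝ᵥ w = v ⬝ᵥ v ∧
      w ⬝ᵥ N.mulVec w ≤ v ⬝ᵥ M.mulVec v) :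
    minEig N ≤ minEig M := by
  have hone : (fun _ : m => (1 : ℝ)) ≠ 0 := by
    intro hh
    exact one_ne_zero (congrFun hh (Classical.arbitrary m))
  obtain ⟨w0, hw0, -, -⟩ := h _ hone
  haveI : Nonempty n := by
    by_contra hn
    rw [not_nonempty_iff] at hn
    exact hw0 (funext fun x => (hn.false x).elim)
  obtain ⟨c, ⟨v0, hv0, hv0e⟩, hray⟩ := herm_min hN
  have hlbN : ∀ t ∈ {t : ℝ | ∃ v : n → ℝ, v ≠ 0 ∧ N.mulVec v = t • v}, c ≤ t := by
    rintro t ⟨v, hv, hve⟩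
    have h5 := hray v
    rw [hve, dotProduct_smul, smul_eq_mul] at h5
    nlinarith [dotProduct_self_pos' hv]
  have h1 : minEig N ≤ c := csInf_le ⟨c, hlbN⟩ ⟨v0, hv0, hv0e⟩
  have h2 : c ≤ minEig M := by
    obtain ⟨c', ⟨vM, hvM, hvMe⟩, -⟩ := herm_min hM
    refine le_csInf ⟨c', vM, hvM, hvMe⟩ ?_
    rintro t ⟨v, hv, hve⟩
    obtain ⟨w, hw, hww, hwN⟩ := h v hv
    have h5 := hray w
    rw [hww] at h5
    have h6 : c * (v ⬝ᵥ v) ≤ v ⬝ᵥ M.mulVec v := le_trans h5 hwN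
    rw [hve, dotProduct_smul, smul_eq_mul] at h6
    nlinarith [dotProduct_self_pos' hv]
  exact h1.trans h2

private lemma quad_nonneg' {m κ : Type*} [Fintype m] [Fintype κ] (P : m → κ → ℝ) (v : m → ℝ) :
    0 ≤ ∑ x, ∑ y, v x * ((∑ f, P x f * P y f) * v y) := by
  have h1 : ∀ x y : m, v x * ((∑ f, P x f * P y f) * v y)
      = ∑ f, (v x * P x f) * (v y * P y f) := by
    intro x y
    rw [Finset.sum_mul, Finset.mul_sum]
    exact Finset.sum_congr rfl fun f _ => by ring
  simp_rw [h1]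
  have h2 : ∑ x, ∑ y, ∑ f, (v x * P x f) * (v y * P y f)
      = ∑ f, (∑ x, v x * P x f) * (∑ y, v y * P y f) := by
    calc ∑ x, ∑ y, ∑ f, (v x * P x f) * (v y * P y f)
        = ∑ x, ∑ f, (v x * P x f) * (∑ y, v y * P y f) := by
          refine Finset.sum_congr rfl fun x _ => ?_
          rw [Finset.sum_comm]
          exact Finset.sum_congr rfl fun f _ => by rw [Finset.mul_sum]
      _ = ∑ f, (∑ x, v x * P x f) * (∑ y, v y * P y f) := by
          rw [Finset.sum_comm]
          exact Finset.sum_congr rfl fun f _ => by rw [Finset.sum_mul]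
  rw [h2]
  exact Finset.sum_nonneg fun f _ => mul_self_nonneg _

private lemma dot_le' {m κ : Type*} [Fintype m] [Fintype κ] (A B : Matrix m m ℝ)
    (P : m → κ → ℝ) (hAB : ∀ x y, B x y - A x y = ∑ f, P x f * P y f) (v : m → ℝ) :
    v ⬝ᵥ A.mulVec v ≤ v ⬝ᵥ B.mulVec v := by
  have key : v ⬝ᵥ B.mulVec v - v ⬝ᵥ A.mulVec v
      = ∑ x, ∑ y, v x * ((∑ f, P x f * P y f) * v y) := by
    simp only [dotProduct, Matrix.mulVec]
    rw [← Finset.sum_sub_distrib]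
    refine Finset.sum_congr rfl fun x _ => ?_
    rw [← mul_sub, ← Finset.sum_sub_distrib, Finset.mul_sum]
    refine Finset.sum_congr rfl fun y _ => ?_
    rw [← sub_mul, hAB]
  have := quad_nonneg' P v
  linarith

open Classical in
/-- Classical indicator function of a proposition. -/
private noncomputable def ind' (p : Prop) : ℝ := if p then 1 else 0

private lemma ind'_eq_ite (p : Prop) [Decidable p] : ind' p = if p then 1 else 0 := by
  by_cases h : p <;> simp [ind', h]

private lemma sum_ind' {V : Type*} [Fintype V] (p q : V → Prop) :
    ∑ f, ind' (p f) * ind' (q f) = (({f | p f ∧ q f} : Set V).ncard : ℝ) := by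
  classical
  rw [Set.ncard_eq_toFinset_card', Set.toFinset_setOf, ← Finset.sum_boole]
  refine Finset.sum_congr rfl fun f _ => ?_
  rw [ind'_eq_ite, ind'_eq_ite]
  split_ifs <;> simp_all

private lemma ncard_split' {W V : Type*} [Fintype W] [Fintype V]
    (G : HoffmanGraph W) (H : HoffmanGraph V) (e : HoffmanEmbedding G H) (x y : W) :
    (H.commonFat (e.toFun x) (e.toFun y)).ncard =
      (G.commonFat x y).ncard +
      ({f : V | (H.fat f ∧ f ∉ Set.range e.toFun ∧ H.adj (e.toFun x) f) ∧
        (H.fat f ∧ f ∉ Set.range e.toFun ∧ H.adj (e.toFun y) f)} : Set V).ncard := by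
  classical
  simp only [HoffmanGraph.commonFat, Set.ncard_eq_toFinset_card', Set.toFinset_setOf]
  have hsplit := Finset.card_filter_add_card_filter_not
    (s := Finset.univ.filter fun f : V =>
      H.fat f ∧ H.adj (e.toFun x) f ∧ H.adj (e.toFun y) f)
    (fun f => f ∈ Set.range e.toFun)
  simp only [Finset.filter_filter] at hsplit
  have hcard1 : (Finset.univ.filter fun f : V =>
      (H.fat f ∧ H.adj (e.toFun x) f ∧ H.adj (e.toFun y) f) ∧ f ∈ Set.range e.toFun).card
      = (Finset.univ.filter fun g : W => G.fat g ∧ G.adj x g ∧ G.adj y g).card := by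
    symm
    refine Finset.card_bij (fun g _ => e.toFun g) ?_ ?_ ?_
    · intro g hg
      rw [Finset.mem_filter] at hg ⊢
      exact ⟨Finset.mem_univ _, ⟨(e.fat_iff g).mp hg.2.1, (e.adj_iff x g).mp hg.2.2.1,
        (e.adj_iff y g).mp hg.2.2.2⟩, ⟨g, rfl⟩⟩
    · intro a _ b _ hab
      exact e.inj hab
    · intro f hf
      rw [Finset.mem_filter] at hf
      obtain ⟨g, rfl⟩ := hf.2.2
      refine ⟨g, ?_, rfl⟩
      rw [Finset.mem_filter]
      exact ⟨Finset.mem_univ _, (e.fat_iff g).mpr hf.2.1.1, (e.adj_iff x g).mpr hf.2.1.2.1,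
        (e.adj_iff y g).mpr hf.2.1.2.2⟩
  have hcard2 : (Finset.univ.filter fun f : V =>
      (H.fat f ∧ H.adj (e.toFun x) f ∧ H.adj (e.toFun y) f) ∧ ¬ f ∈ Set.range e.toFun).card
      = (Finset.univ.filter fun f : V =>
        (H.fat f ∧ f ∉ Set.range e.toFun ∧ H.adj (e.toFun x) f) ∧
        (H.fat f ∧ f ∉ Set.range e.toFun ∧ H.adj (e.toFun y) f)).card := by
    congr 1
    apply Finset.filter_congr
    intro f _
    constructor
    · rintro ⟨⟨h1, h2, h3⟩, h4⟩; exact ⟨⟨h1, h4, h2⟩, ⟨h1, h4, h3⟩⟩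
    · rintro ⟨⟨h1, h4, h2⟩, ⟨_, _, h3⟩⟩; exact ⟨⟨h1, h2, h3⟩, h4⟩
  rw [← hsplit, hcard1, hcard2]

end AuxEig

section AuxHerm

private lemma B_isHermitian' {V : Type*} [Finite V] (H : HoffmanGraph V) :
    H.B.IsHermitian := by
  classical
  unfold Matrix.IsHermitian
  ext x y
  simp only [Matrix.conjTranspose_apply, HoffmanGraph.B, Matrix.of_apply, star_trivial]
  rw [H.commonFat_comm y.1 x.1]
  congr 1
  exact if_congr ⟨fun h => H.symm h, fun h => H.symm h⟩ rfl rfl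

private lemma slimAdj_isHermitian' {V : Type*} [Finite V] (H : HoffmanGraph V) :
    H.slimAdjMatrix.IsHermitian := by
  classical
  unfold Matrix.IsHermitian
  ext x y
  simp only [Matrix.conjTranspose_apply, HoffmanGraph.slimAdjMatrix, Matrix.of_apply,
    star_trivial]
  exact if_congr ⟨fun h => H.symm h, fun h => H.symm h⟩ rfl rfl

end AuxHerm

/-- If `G` is an induced Hoffman subgraph of a Hoffman graph `H`,
then `λ_min(G) ≥ λ_min(H)`; in particular the smallest adjacency eigenvalue of the
slim subgraph of `H` is at least `λ_min(H)`. -/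
theorem statement1 {W V : Type*} [Fintype W] [Fintype V]
    (G : HoffmanGraph W) (H : HoffmanGraph V)
    (e : HoffmanEmbedding G H) (hG : Nonempty G.Slim) :
    G.lamMin ≥ H.lamMin ∧ minEig H.slimAdjMatrix ≥ H.lamMin := by
  have hBH : H.B.IsHermitian := B_isHermitian' H
  have hBG : G.B.IsHermitian := B_isHermitian' G
  haveI : Nonempty G.Slim := hG
  -- the embedding on slim vertices
  set E : G.Slim → H.Slim := fun x => ⟨e.toFun x.1, fun hf => x.2 ((e.fat_iff x.1).mpr hf)⟩
    with hE
  have hEinj : Function.Injective E := by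
    intro a b hab
    exact Subtype.ext (e.inj (congrArg Subtype.val hab))
  -- indicator matrix for fat vertices of H outside the range of e
  set P : G.Slim → V → ℝ := fun x f =>
    ind' (H.fat f ∧ f ∉ Set.range e.toFun ∧ H.adj (e.toFun x.1) f) with hP
  -- submatrix of B(H) along E
  set A' : Matrix G.Slim G.Slim ℝ := Matrix.of (fun x y => H.B (E x) (E y)) with hA'
  have hAB : ∀ x y : G.Slim, G.B x y - A' x y = ∑ f, P x f * P y f := by
    intro x y
    classical
    have hsum : ∑ f, P x f * P y f =
        (({f : V | (H.fat f ∧ f ∉ Set.range e.toFun ∧ H.adj (e.toFun x.1) f) ∧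
          (H.fat f ∧ f ∉ Set.range e.toFun ∧ H.adj (e.toFun y.1) f)} : Set V).ncard : ℝ) := by
      rw [hP]
      exact sum_ind' _ _
    have hcnt := ncard_split' G H e x.1 y.1
    have hif : (if G.adj x.1 y.1 then (1 : ℝ) else 0)
        = if H.adj (e.toFun x.1) (e.toFun y.1) then (1 : ℝ) else 0 := by
      by_cases h : G.adj x.1 y.1
      · rw [if_pos h, if_pos ((e.adj_iff x.1 y.1).mp h)]
      · rw [if_neg h, if_neg (fun hh => h ((e.adj_iff x.1 y.1).mpr hh))]
    have hBGxy : G.B x y = (if G.adj x.1 y.1 then (1 : ℝ) else 0)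
        - ((G.commonFat x.1 y.1).ncard : ℝ) := by
      simp [HoffmanGraph.B]
    have hA'xy : A' x y = (if H.adj (e.toFun x.1) (e.toFun y.1) then (1 : ℝ) else 0)
        - ((H.commonFat (e.toFun x.1) (e.toFun y.1)).ncard : ℝ) := by
      simp [hA', HoffmanGraph.B, hE]
    rw [hBGxy, hA'xy, hsum, ← hif]
    have hcast : ((H.commonFat (e.toFun x.1) (e.toFun y.1)).ncard : ℝ)
        = ((G.commonFat x.1 y.1).ncard : ℝ) +
          (({f : V | (H.fat f ∧ f ∉ Set.range e.toFun ∧ H.adj (e.toFun x.1) f) ∧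
            (H.fat f ∧ f ∉ Set.range e.toFun ∧ H.adj (e.toFun y.1) f)} : Set V).ncard : ℝ) := by
      exact_mod_cast congrArg (Nat.cast : ℕ → ℝ) hcnt
    linarith
  constructor
  · -- part 1
    show minEig H.B ≤ minEig G.B
    refine minEig_mono' hBG hBH ?_
    intro v hv
    set w : H.Slim → ℝ := Function.extend E v 0 with hw
    have hw_off : ∀ z, z ∉ Set.range E → w z = 0 := by
      intro z hz
      have hnex : ¬ ∃ a, E a = z := by simpa [Set.range] using hz
      rw [hw, Function.extend_apply' v (0 : H.Slim → ℝ) z hnex]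
      rfl
    have hwE : ∀ x, w (E x) = v x := fun x => hEinj.extend_apply v 0 x
    have hsumg : ∀ g : H.Slim → ℝ, (∀ z, z ∉ Set.range E → g z = 0) →
        ∑ z, g z = ∑ x, g (E x) := by
      intro g hg
      haveI : DecidableEq H.Slim := fun a b => Classical.propDecidable _
      rw [← Finset.sum_image (g := E) (f := g) (fun a _ b _ hab => hEinj hab)]
      refine (Finset.sum_subset (Finset.subset_univ _) ?_).symm
      intro z _ hz
      refine hg z ?_
      rintro ⟨a, ha⟩
      exact hz (Finset.mem_image.mpr ⟨a, Finset.mem_univ a, ha⟩)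
    obtain ⟨i, hi⟩ := Function.ne_iff.mp hv
    refine ⟨w, ?_, ?_, ?_⟩
    · intro h0
      exact hi (by rw [← hwE i, h0]; rfl)
    · calc dotProduct w w = ∑ z, w z * w z := rfl
        _ = ∑ x, w (E x) * w (E x) := hsumg _ (fun z hz => by rw [hw_off z hz, zero_mul])
        _ = dotProduct v v := by
            refine Finset.sum_congr rfl fun x _ => ?_
            rw [hwE]
    · have hmv : dotProduct w (H.B.mulVec w) = dotProduct v (A'.mulVec v) := by
        calc dotProduct w (H.B.mulVec w) = ∑ z, w z * ∑ z', H.B z z' * w z' := rfl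
          _ = ∑ x, w (E x) * ∑ z', H.B (E x) z' * w z' :=
              hsumg _ (fun z hz => by rw [hw_off z hz, zero_mul])
          _ = ∑ x, v x * ∑ y, H.B (E x) (E y) * v y := by
              refine Finset.sum_congr rfl fun x _ => ?_
              rw [hwE]
              congr 1
              calc ∑ z', H.B (E x) z' * w z'
                  = ∑ y, H.B (E x) (E y) * w (E y) :=
                    hsumg _ (fun z hz => by rw [hw_off z hz, mul_zero])
                _ = ∑ y, H.B (E x) (E y) * v y := by
                    refine Finset.sum_congr rfl fun y _ => ?_
                    rw [hwE]
          _ = dotProduct v (A'.mulVec v) := rfl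
      rw [hmv]
      exact dot_le' A' G.B P hAB v
  · -- part 2
    by_cases hne : Nonempty H.Slim
    · haveI := hne
      show minEig H.B ≤ minEig H.slimAdjMatrix
      refine minEig_mono' (slimAdj_isHermitian' H) hBH ?_
      intro v hv
      refine ⟨v, hv, rfl, ?_⟩
      set P2 : H.Slim → V → ℝ := fun x f => ind' (H.fat f ∧ H.adj x.1 f) with hP2
      refine dot_le' H.B H.slimAdjMatrix P2 ?_ v
      intro x y
      classical
      have hsum : ∑ f, P2 x f * P2 y f =
          (({f : V | (H.fat f ∧ H.adj x.1 f) ∧ (H.fat f ∧ H.adj y.1 f)} : Set V).ncard : ℝ) := by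
        rw [hP2]
        exact sum_ind' _ _
      have hset : ({f : V | (H.fat f ∧ H.adj x.1 f) ∧ (H.fat f ∧ H.adj y.1 f)} : Set V)
          = H.commonFat x.1 y.1 := by
        ext f
        simp only [Set.mem_setOf_eq, HoffmanGraph.commonFat]
        tauto
      rw [hsum, hset]
      have h1 : H.slimAdjMatrix x y = (if H.adj x.1 y.1 then (1 : ℝ) else 0) := by
        simp [HoffmanGraph.slimAdjMatrix]
      have h2 : H.B x y = (if H.adj x.1 y.1 then (1 : ℝ) else 0)
          - ((H.commonFat x.1 y.1).ncard : ℝ) := by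
        simp [HoffmanGraph.B]
      rw [h1, h2]
      ring
    · rw [not_nonempty_iff] at hne
      have hempty : ∀ M : Matrix H.Slim H.Slim ℝ, minEig M = 0 := by
        intro M
        have hset : {t : ℝ | ∃ v : H.Slim → ℝ, v ≠ 0 ∧ M.mulVec v = t • v} = ∅ := by
          rw [Set.eq_empty_iff_forall_notMem]
          rintro t ⟨v, hv, -⟩
          exact hv (funext fun x => (hne.false x).elim)
        unfold minEig
        rw [hset]
        exact Real.sInf_empty
      show minEig H.B ≤ minEig H.slimAdjMatrix
      rw [hempty, hempty]
end

section
/- If a Hoffman graph 𝔥 has a decomposition {𝔥^1, …, 𝔥^n} (with each 𝔥^i having at least one slim vertex), then λ_min(𝔥) = min{ λ_min(𝔥^i) : 1 ≤ i ≤ n }. -/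
section Aux

def eigSet {n : Type*} [Fintype n] (M : Matrix n n ℝ) : Set ℝ :=
  {t : ℝ | ∃ v : n → ℝ, v ≠ 0 ∧ M.mulVec v = t • v}

lemma minEig_eq_sInf_eigSet {n : Type*} [Fintype n] (M : Matrix n n ℝ) :
    minEig M = sInf (eigSet M) := rfl

lemma eigSet_finite {n : Type*} [Fintype n] (M : Matrix n n ℝ) : (eigSet M).Finite := by
  classical
  have h : eigSet M = Module.End.HasEigenvalue (Matrix.mulVecLin M) := by
    ext t
    constructor
    · rintro ⟨v, hv, hMv⟩
      exact Module.End.hasEigenvalue_of_hasEigenvector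
        ⟨Module.End.mem_eigenspace_iff.2 (by simpa using hMv), hv⟩
    · intro h
      obtain ⟨v, hv⟩ := h.exists_hasEigenvector
      exact ⟨v, hv.2, by simpa using Module.End.mem_eigenspace_iff.1 hv.1⟩
  rw [h]
  exact Module.End.finite_hasEigenvalue _

lemma eigSet_nonempty {n : Type*} [Fintype n] [Nonempty n] {M : Matrix n n ℝ}
    (hM : M.IsHermitian) : (eigSet M).Nonempty := by
  classical
  obtain ⟨i⟩ := ‹Nonempty n›
  exact ⟨hM.eigenvalues i, ⇑(hM.eigenvectorBasis i), fun h => hM.eigenvectorBasis.orthonormal.ne_zero i ((WithLp.ofLp_eq_zero 2).1 h),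
    hM.mulVec_eigenvectorBasis i⟩

lemma sInf_iUnion_eigsets {ι : Type*} [Fintype ι] [Nonempty ι] (S : ι → Set ℝ)
    (hne : ∀ i, (S i).Nonempty) (hfin : ∀ i, (S i).Finite) :
    sInf (⋃ i, S i) = ⨅ i, sInf (S i) := by
  have hUfin : (⋃ i, S i).Finite := Set.finite_iUnion hfin
  have hUne : (⋃ i, S i).Nonempty := (hne (Classical.arbitrary ι)).mono (Set.subset_iUnion S _)
  refine le_antisymm (le_ciInf fun i => csInf_le_csInf hUfin.bddBelow (hne i)
    (Set.subset_iUnion S i)) ?_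
  obtain ⟨i, hi⟩ := Set.mem_iUnion.1 (hUne.csInf_mem hUfin)
  exact (ciInf_le (Set.finite_range _).bddBelow i).trans (csInf_le (hfin i).bddBelow hi)

namespace HoffmanGraph

variable {V : Type*} (H : HoffmanGraph V)

open scoped Classical in
lemma B_apply (x y : H.Slim) :
    H.B x y = (if H.adj x.1 y.1 then (1 : ℝ) else 0) - ((H.commonFat x.1 y.1).ncard : ℝ) := rfl

lemma B_isHermitian [Fintype V] : H.B.IsHermitian := by
  classical
  have hsym : ∀ x y : H.Slim, H.B x y = H.B y x := by
    intro x y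
    rw [B_apply, B_apply, H.commonFat_comm]
    congr 1
    by_cases h : H.adj x.1 y.1
    · rw [if_pos h, if_pos (H.symm h)]
    · rw [if_neg h, if_neg fun h' => h (H.symm h')]
  ext x y
  rw [Matrix.conjTranspose_apply, star_trivial, hsym]

variable {ι : Type*} {W : ι → Finset V}

/-- A slim vertex of a part, viewed as a slim vertex of `H`. -/
def embSlim (hD : H.IsDecomposition W) (i : ι) (x : (H.induce (W i) (hD.part_fat i)).Slim) : H.Slim := ⟨x.1.1, x.2⟩

lemma embSlim_mem (hD : H.IsDecomposition W) (i : ι) (x : (H.induce (W i) (hD.part_fat i)).Slim) :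
    (H.embSlim hD i x).1 ∈ W i := x.1.2

lemma B_cross (hD : H.IsDecomposition W) {i j : ι} (hij : i ≠ j) (x y : H.Slim) (hx : x.1 ∈ W i) (hy : y.1 ∈ W j) :
    H.B x y = 0 := by
  obtain ⟨h1, h2⟩ := hD.cross i j hij x.1 y.1 hx hy x.2 y.2
  rw [B_apply]
  by_cases h : H.adj x.1 y.1
  · rw [if_pos h, h2.2 h]; norm_num
  · have h0 : (H.commonFat x.1 y.1).ncard = 0 := by
      rcases Nat.lt_or_ge (H.commonFat x.1 y.1).ncard 1 with h' | h'
      · omega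
      · exact absurd (h2.1 (le_antisymm h1 h')) h
    rw [if_neg h, h0]
    norm_num

lemma B_induce (hD : H.IsDecomposition W) (i : ι) (x y : (H.induce (W i) (hD.part_fat i)).Slim) :
    (H.induce (W i) (hD.part_fat i)).B x y = H.B (H.embSlim hD i x) (H.embSlim hD i y) := by
  have himg : Subtype.val '' ((H.induce (W i) (hD.part_fat i)).commonFat x.1 y.1)
      = H.commonFat x.1.1 y.1.1 := by
    ext f
    simp only [Set.mem_image, commonFat, Set.mem_setOf_eq, induce]
    constructor
    · rintro ⟨g, ⟨hg1, hg2, hg3⟩, rfl⟩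
      exact ⟨hg1, hg2, hg3⟩
    · rintro ⟨hf1, hf2, hf3⟩
      have hfW : f ∈ W i := hD.fat_closed i x.1.1 f x.1.2 x.2 hf1 hf2
      exact ⟨⟨f, hfW⟩, ⟨hf1, hf2, hf3⟩, rfl⟩
  rw [B_apply, B_apply]
  have : ((H.induce (W i) (hD.part_fat i)).commonFat x.1 y.1).ncard
      = (H.commonFat x.1.1 y.1.1).ncard := by
    rw [← himg, Set.ncard_image_of_injective _ Subtype.val_injective]
  rw [this]
  rfl

end HoffmanGraph

end Aux

namespace HoffmanGraph

variable {V ι : Type*} (H : HoffmanGraph V) {W : ι → Finset V}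

lemma embSlim_injective (hD : H.IsDecomposition W) (i : ι) :
    Function.Injective (H.embSlim hD i) := by
  intro x y h
  apply Subtype.ext
  apply Subtype.ext
  exact congrArg (fun s : H.Slim => s.1) h

/-- The slim vertices of `H` are in bijection with the disjoint union of the slim
vertices of the parts of a decomposition. -/
noncomputable def sigmaEquiv (hD : H.IsDecomposition W) :
    (Σ i, (H.induce (W i) (hD.part_fat i)).Slim) ≃ H.Slim :=
  Equiv.ofBijective (fun p => H.embSlim hD p.1 p.2) (by
    constructor
    · rintro ⟨i, x⟩ ⟨j, y⟩ h
      have hval : x.1.1 = y.1.1 := congrArg Subtype.val h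
      by_cases hij : i = j
      · subst hij
        exact congrArg (Sigma.mk i) (Subtype.ext (Subtype.ext hval))
      · exact (hD.slim_disj i j hij x.1.1 x.2 x.1.2 (by rw [hval]; exact y.1.2)).elim
    · intro s
      obtain ⟨i, hi⟩ := hD.cover s.1
      exact ⟨⟨i, ⟨⟨s.1, hi⟩, s.2⟩⟩, rfl⟩)

lemma sigmaEquiv_apply (hD : H.IsDecomposition W)
    (p : Σ i, (H.induce (W i) (hD.part_fat i)).Slim) :
    H.sigmaEquiv hD p = H.embSlim hD p.1 p.2 := rfl

lemma mulVec_embSlim [Fintype V] [Fintype ι] (hD : H.IsDecomposition W)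
    (v : H.Slim → ℝ) (i : ι) (z : (H.induce (W i) (hD.part_fat i)).Slim) :
    H.B.mulVec v (H.embSlim hD i z)
      = ∑ y : (H.induce (W i) (hD.part_fat i)).Slim,
          (H.induce (W i) (hD.part_fat i)).B z y * v (H.embSlim hD i y) := by
  have h0 : H.B.mulVec v (H.embSlim hD i z)
      = ∑ s : H.Slim, H.B (H.embSlim hD i z) s * v s := by
    simp [Matrix.mulVec, dotProduct]
  rw [h0, ← Equiv.sum_comp (H.sigmaEquiv hD)
    (fun s => H.B (H.embSlim hD i z) s * v s), ← Finset.univ_sigma_univ, Finset.sum_sigma]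
  simp only [sigmaEquiv_apply]
  rw [Finset.sum_eq_single i]
  · exact Finset.sum_congr rfl fun y _ => by rw [H.B_induce hD]
  · intro j _ hj
    refine Finset.sum_eq_zero fun y _ => ?_
    rw [H.B_cross hD hj.symm _ _ (H.embSlim_mem hD i z) (H.embSlim_mem hD j y), zero_mul]
  · intro h; exact absurd (Finset.mem_univ i) h

lemma eigSet_B_eq [Fintype V] [Fintype ι] (hD : H.IsDecomposition W) :
    eigSet H.B = ⋃ i, eigSet (H.induce (W i) (hD.part_fat i)).B := by
  ext t
  simp only [Set.mem_iUnion]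
  constructor
  · rintro ⟨v, hv, hMv⟩
    obtain ⟨s, hs⟩ := Function.ne_iff.1 hv
    obtain ⟨⟨i, x⟩, rfl⟩ := (H.sigmaEquiv hD).surjective s
    refine ⟨i, fun y => v (H.embSlim hD i y), Function.ne_iff.2 ⟨x, hs⟩, ?_⟩
    funext z
    have h1 : H.B.mulVec v (H.embSlim hD i z) = t * v (H.embSlim hD i z) := by
      rw [hMv]; simp
    have h2 : ((H.induce (W i) (hD.part_fat i)).B.mulVec fun y => v (H.embSlim hD i y)) z
        = ∑ y : (H.induce (W i) (hD.part_fat i)).Slim,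
            (H.induce (W i) (hD.part_fat i)).B z y * v (H.embSlim hD i y) := by
      simp [Matrix.mulVec, dotProduct]
    rw [h2, ← H.mulVec_embSlim hD, h1]
    simp
  · rintro ⟨i, u, hu, hMu⟩
    set v : H.Slim → ℝ := Function.extend (H.embSlim hD i) u 0 with hvdef
    have hvi : ∀ y : (H.induce (W i) (hD.part_fat i)).Slim, v (H.embSlim hD i y) = u y :=
      fun y => (H.embSlim_injective hD i).extend_apply u 0 y
    have hvj : ∀ j, j ≠ i → ∀ y : (H.induce (W j) (hD.part_fat j)).Slim,
        v (H.embSlim hD j y) = 0 := by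
      intro j hji y
      rw [hvdef, Function.extend_apply', Pi.zero_apply]
      rintro ⟨a, ha⟩
      have hval : a.1.1 = y.1.1 := congrArg Subtype.val ha
      exact hD.slim_disj i j (fun h => hji h.symm) a.1.1 a.2 a.1.2 (by rw [hval]; exact y.1.2)
    obtain ⟨x, hx⟩ := Function.ne_iff.1 hu
    refine ⟨v, Function.ne_iff.2 ⟨H.embSlim hD i x, by rw [hvi]; exact hx⟩, ?_⟩
    funext s
    obtain ⟨⟨j, z⟩, rfl⟩ := (H.sigmaEquiv hD).surjective s
    show H.B.mulVec v (H.embSlim hD j z) = (t • v) (H.embSlim hD j z)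
    rw [H.mulVec_embSlim hD, Pi.smul_apply, smul_eq_mul]
    by_cases hji : j = i
    · subst hji
      have h3 : ∑ y, (H.induce (W j) (hD.part_fat j)).B z y * v (H.embSlim hD j y)
          = ∑ y, (H.induce (W j) (hD.part_fat j)).B z y * u y :=
        Finset.sum_congr rfl fun y _ => by rw [hvi]
      have h4 : ∑ y, (H.induce (W j) (hD.part_fat j)).B z y * u y
          = (H.induce (W j) (hD.part_fat j)).B.mulVec u z := by
        simp [Matrix.mulVec, dotProduct]
      rw [h3, h4, hMu, hvi]
      simp
    · rw [Finset.sum_eq_zero fun y _ => by rw [hvj j hji y, mul_zero], hvj j hji z, mul_zero]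

end HoffmanGraph

/-- Lemma 2.12 of JKMT. If a Hoffman graph `H` has a decomposition
`{𝔥^i}_{i=1}^n` (each part having at least one slim vertex), then
`λ_min(H) = min { λ_min(𝔥^i) : 1 ≤ i ≤ n }`. -/
theorem statement2 {V ι : Type*} [Fintype V] [Fintype ι] [Nonempty ι]
    (H : HoffmanGraph V) (W : ι → Finset V) (hD : H.IsDecomposition W)
    (hslim : ∀ i, ∃ x ∈ W i, ¬ H.fat x) :
    H.lamMin = ⨅ i, (H.induce (W i) (hD.part_fat i)).lamMin := by
  have hne : ∀ i, Nonempty (H.induce (W i) (hD.part_fat i)).Slim := by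
    intro i
    obtain ⟨x, hx, hf⟩ := hslim i
    exact ⟨⟨⟨x, hx⟩, hf⟩⟩
  have h1 : H.lamMin = sInf (⋃ i, eigSet (H.induce (W i) (hD.part_fat i)).B) := by
    rw [HoffmanGraph.lamMin, minEig_eq_sInf_eigSet, H.eigSet_B_eq hD]
  rw [h1, sInf_iUnion_eigsets]
  · rfl
  · intro i
    haveI := hne i
    exact eigSet_nonempty (HoffmanGraph.B_isHermitian _)
  · intro i
    exact eigSet_finite _
end

section
/- Let G be a slim graph (a Hoffman graph with no fat vertices, i.e. an ordinary finite simple graph) with at least two vertices and maximum degree k. Then G is (−k)-reducible. -/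
/-! ### Auxiliary material for Statement 3 -/

lemma minEig_ge_of_rowsum {n : Type*} [Fintype n] (M : Matrix n n ℝ) (k : ℝ) (hk : 0 ≤ k)
    (h : ∀ i, ∑ j, |M i j| ≤ k) : -k ≤ minEig M := by
  classical
  unfold minEig
  by_cases hs : {t : ℝ | ∃ v : n → ℝ, v ≠ 0 ∧ M.mulVec v = t • v} = ∅
  · rw [hs, Real.sInf_empty]; linarith
  · apply le_csInf (Set.nonempty_iff_ne_empty.2 hs)
    rintro t ⟨v, hv, hMv⟩
    obtain ⟨i0, hi0⟩ := Function.ne_iff.1 hv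
    obtain ⟨i, -, hi⟩ := Finset.exists_max_image Finset.univ (fun i => |v i|)
      ⟨i0, Finset.mem_univ _⟩
    have hvi : 0 < |v i| :=
      lt_of_lt_of_le (abs_pos.2 hi0) (hi i0 (Finset.mem_univ _))
    have key : |t| * |v i| ≤ k * |v i| := by
      calc |t| * |v i| = |t * v i| := (abs_mul _ _).symm
        _ = |(M.mulVec v) i| := by rw [hMv]; simp
        _ = |∑ j, M i j * v j| := by simp [Matrix.mulVec, dotProduct]
        _ ≤ ∑ j, |M i j * v j| := Finset.abs_sum_le_sum_abs _ _
        _ = ∑ j, |M i j| * |v j| := by simp [abs_mul]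
        _ ≤ ∑ j, |M i j| * |v i| := Finset.sum_le_sum fun j _ =>
              mul_le_mul_of_nonneg_left (hi j (Finset.mem_univ _)) (abs_nonneg _)
        _ = (∑ j, |M i j|) * |v i| := (Finset.sum_mul _ _ _).symm
        _ ≤ k * |v i| := mul_le_mul_of_nonneg_right (h i) hvi.le
    have ht : |t| ≤ k := le_of_mul_le_mul_right key hvi
    linarith [neg_abs_le t, (abs_le.1 ht).1]

attribute [local instance 2000] HoffmanGraph.instFintypeSlim HoffmanGraph.instFintypeFatV

namespace Stmt3

variable {V : Type*} [Fintype V] (H : HoffmanGraph V) (v₀ : V)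

/-- The set of neighbours of `v₀`, as a type. -/
def N : Type _ := {u : V // H.adj v₀ u}

instance : Finite (N H v₀) := by unfold N; infer_instance
noncomputable instance : Fintype (N H v₀) := Fintype.ofFinite _

/-- The vertex type of the enlarged Hoffman graph: a `Type 0` copy of `V`
together with one fat vertex for each edge at `v₀`. -/
abbrev VT : Type := Fin (Fintype.card V) ⊕ Fin (Fintype.card (N H v₀))

instance : Finite (VT H v₀) := by unfold VT; infer_instance
noncomputable instance : Fintype (VT H v₀) := by unfold VT; infer_instance

/-- Back from the `Fin` copy to `V`. -/
noncomputable def aV : Fin (Fintype.card V) → V := (Fintype.equivFin V).symm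

lemma aV_inj : Function.Injective (aV (V := V)) := (Fintype.equivFin V).symm.injective

lemma aV_eq (x : V) : aV (Fintype.equivFin V x) = x := (Fintype.equivFin V).symm_apply_apply x

/-- Back from the `Fin` copy of the neighbours to the neighbours. -/
noncomputable def bN : Fin (Fintype.card (N H v₀)) → N H v₀ := (Fintype.equivFin _).symm

lemma bN_inj : Function.Injective (bN H v₀) := (Fintype.equivFin _).symm.injective

lemma bN_surj : Function.Surjective (bN H v₀) := (Fintype.equivFin _).symm.surjective

/-- Adjacency of the enlarged Hoffman graph. -/
def adj' : VT H v₀ → VT H v₀ → Prop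
  | .inl i, .inl j => H.adj (aV i) (aV j)
  | .inl i, .inr s => aV i = v₀ ∨ aV i = (bN H v₀ s).1
  | .inr s, .inl i => aV i = v₀ ∨ aV i = (bN H v₀ s).1
  | .inr _, .inr _ => False

/-- Fatness of the enlarged Hoffman graph. -/
def fat' : VT H v₀ → Prop
  | .inl _ => False
  | .inr _ => True

@[simp] lemma fat'_inl (i) : fat' H v₀ (Sum.inl i) = False := rfl
@[simp] lemma fat'_inr (s) : fat' H v₀ (Sum.inr s) = True := rfl
@[simp] lemma adj'_inl_inl (i j) : adj' H v₀ (Sum.inl i) (Sum.inl j) = H.adj (aV i) (aV j) := rfl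
@[simp] lemma adj'_inl_inr (i s) :
    adj' H v₀ (Sum.inl i) (Sum.inr s) = (aV i = v₀ ∨ aV i = (bN H v₀ s).1) := rfl
@[simp] lemma adj'_inr_inl (i s) :
    adj' H v₀ (Sum.inr s) (Sum.inl i) = (aV i = v₀ ∨ aV i = (bN H v₀ s).1) := rfl
@[simp] lemma adj'_inr_inr (s t) : adj' H v₀ (Sum.inr s) (Sum.inr t) = False := rfl

/-- The enlarged Hoffman graph. -/
noncomputable def H' : HoffmanGraph (VT H v₀) where
  adj := adj' H v₀
  symm := by
    rintro (i | s) (j | t) h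
    · exact H.symm h
    · exact h
    · exact h
    · exact h.elim
  loopless := by
    rintro (i | s) h
    · exact H.loopless _ h
    · exact h
  fat := fat' H v₀
  fat_slim := by
    rintro (i | s) hx
    · exact hx.elim
    · exact ⟨Sum.inl (Fintype.equivFin V v₀), Or.inl (aV_eq v₀), not_false⟩
  fat_nonadj := by
    rintro (i | s) (j | t) hx hy
    · exact hx.elim
    · exact hx.elim
    · exact hy.elim
    · exact fun h => h

@[simp] lemma H'_adj (x y) : (H' H v₀).adj x y = adj' H v₀ x y := rfl
@[simp] lemma H'_fat (x) : (H' H v₀).fat x = fat' H v₀ x := rfl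

/-- Membership predicate of the two parts of the decomposition. -/
def inW : Fin 2 → VT H v₀ → Prop := fun i w =>
  match w with
  | .inl j => if i = 0 then j = Fintype.equivFin V v₀ else j ≠ Fintype.equivFin V v₀
  | .inr _ => True

/-- The two parts of the decomposition. -/
noncomputable def W : Fin 2 → Finset (VT H v₀) := fun i =>
  @Finset.filter _ (inW H v₀ i) (Classical.decPred _) Finset.univ

lemma mem_W {i : Fin 2} {w : VT H v₀} : w ∈ W H v₀ i ↔ inW H v₀ i w := by
  letI : DecidablePred (inW H v₀ i) := Classical.decPred _
  unfold W
  rw [Finset.mem_filter]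
  simp

lemma mem_W_inr {i : Fin 2} {s} : (Sum.inr s : VT H v₀) ∈ W H v₀ i := by
  rw [mem_W]; trivial

lemma mem_W0_inl {j} : (Sum.inl j : VT H v₀) ∈ W H v₀ 0 ↔ j = Fintype.equivFin V v₀ := by
  rw [mem_W]; simp [inW]

lemma mem_W1_inl {j} : (Sum.inl j : VT H v₀) ∈ W H v₀ 1 ↔ j ≠ Fintype.equivFin V v₀ := by
  rw [mem_W]; simp [inW]

lemma fin2_cases (i : Fin 2) : i = 0 ∨ i = 1 := by omega

/-- Common fat neighbours in `H'` of two slim vertices. -/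
lemma commonFat_H' (j j' : Fin (Fintype.card V)) :
    (H' H v₀).commonFat (Sum.inl j) (Sum.inl j') =
      {f | ∃ s, f = Sum.inr s ∧ (aV j = v₀ ∨ aV j = (bN H v₀ s).1) ∧
        (aV j' = v₀ ∨ aV j' = (bN H v₀ s).1)} := by
  ext f
  simp only [HoffmanGraph.commonFat, Set.mem_setOf_eq, H'_fat, H'_adj]
  cases f with
  | inl i =>
    simp only [fat'_inl, false_and, false_iff]
    rintro ⟨s, h, -⟩; exact Sum.inl_ne_inr h
  | inr s =>
    simp only [fat'_inr, true_and, adj'_inl_inr]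
    constructor
    · rintro ⟨h1, h2⟩; exact ⟨s, rfl, h1, h2⟩
    · rintro ⟨s', h, h1, h2⟩
      obtain rfl : s' = s := (Sum.inr.injEq _ _ ▸ h).symm
      exact ⟨h1, h2⟩

/-- The key computation: the common fat neighbours of two distinct slim vertices,
neither of which is `v₀`'s copy... (actually for one ≠ v₀). -/
lemma commonFat_ne (j j' : Fin (Fintype.card V)) (hj' : j' ≠ Fintype.equivFin V v₀) :
    ((H' H v₀).commonFat (Sum.inl j) (Sum.inl j')).ncard ≤ 1 ∧
      (((H' H v₀).commonFat (Sum.inl j) (Sum.inl j')).ncard = 1 ↔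
        (aV j = v₀ ∨ aV j = aV j') ∧ H.adj v₀ (aV j')) := by
  have hav : aV j' ≠ v₀ := fun h => hj' (by
    rw [← h]; exact ((Fintype.equivFin V).apply_symm_apply j').symm)
  by_cases hadj : (aV j = v₀ ∨ aV j = aV j') ∧ H.adj v₀ (aV j')
  · have hset : (H' H v₀).commonFat (Sum.inl j) (Sum.inl j') =
        {Sum.inr ((Fintype.equivFin (N H v₀)) ⟨aV j', hadj.2⟩)} := by
      rw [commonFat_H' H v₀ j j']
      ext f
      simp only [Set.mem_setOf_eq, Set.mem_singleton_iff]
      constructor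
      · rintro ⟨s, rfl, h1, h2⟩
        have hs : (bN H v₀ s) = ⟨aV j', hadj.2⟩ := by
          rcases h2 with h2 | h2
          · exact absurd h2 hav
          · exact Subtype.ext h2.symm
        have : s = (Fintype.equivFin (N H v₀)) ⟨aV j', hadj.2⟩ := by
          have := congrArg (Fintype.equivFin (N H v₀)) hs
          rwa [show (Fintype.equivFin (N H v₀)) (bN H v₀ s) = s from
            (Fintype.equivFin (N H v₀)).apply_symm_apply s] at this
        rw [this]
      · rintro rfl
        refine ⟨_, rfl, ?_, ?_⟩
        · have hb : bN H v₀ ((Fintype.equivFin (N H v₀)) ⟨aV j', hadj.2⟩) = ⟨aV j', hadj.2⟩ :=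
            (Fintype.equivFin (N H v₀)).symm_apply_apply _
          rcases hadj.1 with h | h
          · exact Or.inl h
          · exact Or.inr (by rw [hb]; exact h)
        · have hb : bN H v₀ ((Fintype.equivFin (N H v₀)) ⟨aV j', hadj.2⟩) = ⟨aV j', hadj.2⟩ :=
            (Fintype.equivFin (N H v₀)).symm_apply_apply _
          exact Or.inr (by rw [hb])
    rw [hset]
    rw [Set.ncard_singleton]
    exact ⟨le_refl 1, by simp [hadj]⟩
  · have hset : (H' H v₀).commonFat (Sum.inl j) (Sum.inl j') = ∅ := by
      rw [commonFat_H' H v₀ j j']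
      ext f
      simp only [Set.mem_setOf_eq, Set.mem_empty_iff_false, iff_false]
      rintro ⟨s, rfl, h1, h2⟩
      have h2' : aV j' = (bN H v₀ s).1 := h2.resolve_left hav
      apply hadj
      constructor
      · rcases h1 with h1 | h1
        · exact Or.inl h1
        · exact Or.inr (by rw [h1, ← h2'])
      · rw [h2']; exact (bN H v₀ s).2
    rw [hset]
    rw [Set.ncard_empty]
    exact ⟨by omega, by simp [hadj]⟩


@[simp] lemma induce_adj (Wf : Finset (VT H v₀)) (h) (a b) :
    ((H' H v₀).induce Wf h).adj a b ↔ adj' H v₀ a.1 b.1 := Iff.rfl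

lemma induce_fat (Wf : Finset (VT H v₀)) (h) (a) :
    ((H' H v₀).induce Wf h).fat a ↔ fat' H v₀ a.1 := Iff.rfl

open Classical in
lemma B_apply {V₂ : Type*} (G : HoffmanGraph V₂) (x y : G.Slim) :
    G.B x y = (if G.adj x.1 y.1 then (1 : ℝ) else 0) - ((G.commonFat x.1 y.1).ncard : ℝ) := rfl

lemma commonFat_induce (Wf : Finset (VT H v₀)) (h) (a b) :
    ((H' H v₀).induce Wf h).commonFat a b =
      {f : {v : VT H v₀ // v ∈ Wf} | fat' H v₀ f.1 ∧ adj' H v₀ a.1 f.1 ∧ adj' H v₀ b.1 f.1} :=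
  rfl

/-- The decomposition of `H'` into the two parts. -/
lemma isDecomp (hcard : 2 ≤ Fintype.card V) :
    (H' H v₀).IsDecomposition (W H v₀) := by
  constructor
  · intro i
    rcases fin2_cases i with rfl | rfl
    · exact ⟨Sum.inl (Fintype.equivFin V v₀), (mem_W0_inl H v₀).2 rfl⟩
    · obtain ⟨j, hj⟩ := Fintype.exists_ne_of_one_lt_card
        (by rw [Fintype.card_fin]; omega) (Fintype.equivFin V v₀)
      exact ⟨Sum.inl j, (mem_W1_inl H v₀).2 hj⟩
  · rintro (j | s)
    · by_cases hj : j = Fintype.equivFin V v₀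
      · exact ⟨0, (mem_W0_inl H v₀).2 hj⟩
      · exact ⟨1, (mem_W1_inl H v₀).2 hj⟩
    · exact ⟨0, mem_W_inr H v₀⟩
  · intro i j hij x hx h1 h2
    cases x with
    | inr s => exact hx trivial
    | inl m =>
      rcases fin2_cases i with rfl | rfl <;> rcases fin2_cases j with rfl | rfl
      · exact hij rfl
      · exact (mem_W1_inl H v₀).1 h2 ((mem_W0_inl H v₀).1 h1)
      · exact (mem_W1_inl H v₀).1 h1 ((mem_W0_inl H v₀).1 h2)
      · exact hij rfl
  · intro i x y hx hxs hy hadj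
    cases y with
    | inl m => exact hy.elim
    | inr s => exact mem_W_inr H v₀
  · intro i y hy hyf
    cases y with
    | inl m => exact hyf.elim
    | inr s =>
      rcases fin2_cases i with rfl | rfl
      · exact ⟨Sum.inl (Fintype.equivFin V v₀), (mem_W0_inl H v₀).2 rfl, not_false,
          Or.inl (aV_eq v₀)⟩
      · refine ⟨Sum.inl (Fintype.equivFin V (bN H v₀ s).1), (mem_W1_inl H v₀).2 ?_, not_false,
          Or.inr (aV_eq _)⟩
        intro hh
        have h2 : ((bN H v₀ s).1 : V) = v₀ := (Fintype.equivFin V).injective hh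
        have h3 := (bN H v₀ s).2
        rw [h2] at h3
        exact H.loopless v₀ h3
  · intro i j hij x y hx hy hxs hys
    cases x with
    | inr s => exact (hxs trivial).elim
    | inl jx =>
    cases y with
    | inr s => exact (hys trivial).elim
    | inl jy =>
    rcases fin2_cases i with rfl | rfl <;> rcases fin2_cases j with rfl | rfl
    · exact (hij rfl).elim
    · have h := commonFat_ne H v₀ jx jy ((mem_W1_inl H v₀).1 hy)
      refine ⟨h.1, ?_⟩
      rw [h.2]
      have hjx : jx = Fintype.equivFin V v₀ := (mem_W0_inl H v₀).1 hx
      subst hjx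
      constructor
      · rintro ⟨h1, h2⟩
        show H.adj (aV (Fintype.equivFin V v₀)) (aV jy)
        rw [aV_eq]; exact h2
      · intro hadj
        have hv : aV (Fintype.equivFin V v₀) = v₀ := aV_eq v₀
        refine ⟨Or.inl hv, ?_⟩
        have : H.adj (aV (Fintype.equivFin V v₀)) (aV jy) := hadj
        rwa [hv] at this
    · have h := commonFat_ne H v₀ jy jx ((mem_W1_inl H v₀).1 hx)
      rw [(H' H v₀).commonFat_comm]
      refine ⟨h.1, ?_⟩
      rw [h.2]
      have hjy : jy = Fintype.equivFin V v₀ := (mem_W0_inl H v₀).1 hy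
      subst hjy
      constructor
      · rintro ⟨h1, h2⟩
        show H.adj (aV jx) (aV (Fintype.equivFin V v₀))
        rw [aV_eq]; exact H.symm h2
      · intro hadj
        have hv : aV (Fintype.equivFin V v₀) = v₀ := aV_eq v₀
        refine ⟨Or.inl hv, ?_⟩
        have : H.adj (aV jx) (aV (Fintype.equivFin V v₀)) := hadj
        rw [hv] at this
        exact H.symm this
    · exact (hij rfl).elim

/-- Every slim vertex of the first part is the copy of `v₀`. -/
lemma slim0_eq (h) (x : ((H' H v₀).induce (W H v₀ 0) h).Slim) :
    x.1.1 = Sum.inl (Fintype.equivFin V v₀) := by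
  obtain ⟨⟨w, hw⟩, hs⟩ := x
  cases w with
  | inr s => exact absurd trivial hs
  | inl j => exact congrArg Sum.inl ((mem_W0_inl H v₀).1 hw)

/-- Every slim vertex of the second part is the copy of a vertex other than `v₀`. -/
lemma slim1_spec (h) (x : ((H' H v₀).induce (W H v₀ 1) h).Slim) :
    ∃ j, x.1.1 = Sum.inl j ∧ j ≠ Fintype.equivFin V v₀ := by
  obtain ⟨⟨w, hw⟩, hs⟩ := x
  cases w with
  | inr s => exact absurd trivial hs
  | inl j => exact ⟨j, rfl, (mem_W1_inl H v₀).1 hw⟩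

lemma aV_ne_v₀ {j : Fin (Fintype.card V)} (hj : j ≠ Fintype.equivFin V v₀) : aV j ≠ v₀ :=
  fun h => hj (by rw [← h]; exact ((Fintype.equivFin V).apply_symm_apply j).symm)


/-- The minimum eigenvalue bound for the slim graph `H` itself. -/
lemma lamMin_H_ge (hslim : ∀ x : V, ¬ H.fat x) (k : ℕ) (hk : ∀ x : V, H.degree x ≤ k) :
    -(k : ℝ) ≤ H.lamMin := by
  apply minEig_ge_of_rowsum _ _ (Nat.cast_nonneg k)
  intro x
  classical
  have hB : ∀ y : H.Slim, |H.B x y| = if H.adj x.1 y.1 then (1 : ℝ) else 0 := by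
    intro y
    have hcf : H.commonFat x.1 y.1 = ∅ := by
      ext f; simp [HoffmanGraph.commonFat, hslim f]
    rw [B_apply, hcf]
    simp only [Set.ncard_empty, Nat.cast_zero, sub_zero]
    split <;> norm_num
  calc ∑ y, |H.B x y| = ∑ y : H.Slim, (if H.adj x.1 y.1 then (1 : ℝ) else 0) :=
        Finset.sum_congr rfl fun y _ => hB y
    _ = ((Finset.univ.filter fun y : H.Slim => H.adj x.1 y.1).card : ℝ) := by
        rw [Finset.sum_boole]
    _ ≤ (k : ℝ) := by
        have hle : (Finset.univ.filter fun y : H.Slim => H.adj x.1 y.1).card ≤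
            ({y : V | H.adj x.1 y}).toFinset.card := by
          apply Finset.card_le_card_of_injOn (fun y => y.1)
          · intro y hy
            rw [Finset.mem_coe, Set.mem_toFinset]
            exact (Finset.mem_filter.1 (Finset.mem_coe.1 hy)).2
          · exact fun a _ b _ hab => Subtype.ext hab
        have hdeg : ({y : V | H.adj x.1 y}).toFinset.card = H.degree x.1 :=
          (Set.ncard_eq_toFinset_card' _).symm
        have : (Finset.univ.filter fun y : H.Slim => H.adj x.1 y.1).card ≤ k := by
          rw [hdeg] at hle
          exact le_trans hle (hk x.1)
        exact_mod_cast this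

/-- The minimum eigenvalue bound for the first part of the decomposition. -/
lemma lamMin_W0_ge (k : ℕ) (hk : ∀ x : V, H.degree x ≤ k) (h) :
    -(k : ℝ) ≤ ((H' H v₀).induce (W H v₀ 0) h).lamMin := by
  set G := (H' H v₀).induce (W H v₀ 0) h with hG
  apply minEig_ge_of_rowsum _ _ (Nat.cast_nonneg k)
  intro x
  classical
  have hsub : ∀ y : G.Slim, y = x := by
    intro y
    apply Subtype.ext; apply Subtype.ext
    rw [slim0_eq H v₀ h y, slim0_eq H v₀ h x]
  have huniv : (Finset.univ : Finset G.Slim) = {x} :=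
    Finset.eq_singleton_iff_unique_mem.2 ⟨Finset.mem_univ _, fun y _ => hsub y⟩
  rw [huniv, Finset.sum_singleton]
  -- compute |B x x|
  have hx1 : x.1.1 = Sum.inl (Fintype.equivFin V v₀) := slim0_eq H v₀ h x
  have hadjxx : ¬ G.adj x.1 x.1 := by
    rw [induce_adj, hx1]
    intro hh
    exact H.loopless (aV (Fintype.equivFin V v₀)) hh
  have hc : (G.commonFat x.1 x.1).ncard ≤ k := by
    have hmap : ∀ f ∈ G.commonFat x.1 x.1,
        (Sum.elim (fun _ => v₀) (fun s => (bN H v₀ s).1) f.1 : V) ∈ {u : V | H.adj v₀ u} := by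
      rintro ⟨(j | s), hf⟩ hfm
      · exact absurd hfm.1 not_false
      · exact (bN H v₀ s).2
    have hinj : Set.InjOn (fun f : {v : VT H v₀ // v ∈ W H v₀ 0} =>
        (Sum.elim (fun _ => v₀) (fun s => (bN H v₀ s).1) f.1 : V)) (G.commonFat x.1 x.1) := by
      rintro ⟨(j | s), hf⟩ hfm ⟨(j' | s'), hf'⟩ hfm' hg
      · exact absurd hfm.1 not_false
      · exact absurd hfm.1 not_false
      · exact absurd hfm'.1 not_false
      · simp only [Sum.elim_inr] at hg
        have : s = s' := bN_inj H v₀ (Subtype.ext hg)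
        subst this; rfl
    have := Set.ncard_le_ncard_of_injOn _ hmap hinj (Set.toFinite _)
    exact le_trans this (hk v₀)
  rw [B_apply, if_neg hadjxx, zero_sub, abs_neg, abs_of_nonneg (Nat.cast_nonneg _)]
  exact_mod_cast hc


/-- The minimum eigenvalue bound for the second part of the decomposition. -/
lemma lamMin_W1_ge (k : ℕ) (hk : ∀ x : V, H.degree x ≤ k) (h) :
    -(k : ℝ) ≤ ((H' H v₀).induce (W H v₀ 1) h).lamMin := by
  set G := (H' H v₀).induce (W H v₀ 1) h with hG
  apply minEig_ge_of_rowsum _ _ (Nat.cast_nonneg k)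
  intro x
  classical
  obtain ⟨jx, hjx, hjxne⟩ := slim1_spec H v₀ h x
  set u := aV jx with hu
  have hune : u ≠ v₀ := aV_ne_v₀ v₀ hjxne
  set g : G.Slim → V := fun y => if y = x then v₀ else Sum.elim aV (fun _ => v₀) y.1.1 with hg
  have key : ∀ y : G.Slim, |G.B x y| ≤ if H.adj u (g y) then (1 : ℝ) else 0 := by
    intro y
    obtain ⟨jy, hjy, hjyne⟩ := slim1_spec H v₀ h y
    by_cases hyx : y = x
    · subst hyx
      have hgy : g y = v₀ := if_pos rfl
      rw [hgy]
      have hadjyy : ¬ G.adj y.1 y.1 := by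
        rw [induce_adj, hjy]
        exact fun hh => H.loopless (aV jy) hh
      rw [B_apply, if_neg hadjyy, zero_sub, abs_neg, abs_of_nonneg (Nat.cast_nonneg _)]
      -- show ncard ≤ ite
      have hjyx : jy = jx := Sum.inl_injective (hjy.symm.trans hjx)
      subst hjyx
      by_cases hadj : H.adj v₀ u
      · have hsub : G.commonFat y.1 y.1 ⊆
            {(⟨Sum.inr (Fintype.equivFin (N H v₀) ⟨u, hadj⟩), mem_W_inr H v₀⟩ :
              {v : VT H v₀ // v ∈ W H v₀ 1})} := by
          rintro ⟨(j | s), hf⟩ hfm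
          · exact absurd hfm.1 not_false
          · have h1 : adj' H v₀ y.1.1 (Sum.inr s) := hfm.2.1
            rw [hjy] at h1
            have h1' : aV jy = (bN H v₀ s).1 := by
              rcases h1 with h1 | h1
              · exact absurd h1 hune
              · exact h1
            have hbs : bN H v₀ s = ⟨u, hadj⟩ := Subtype.ext h1'.symm
            have hseq : s = Fintype.equivFin (N H v₀) ⟨u, hadj⟩ := by
              have h6 := congrArg (Fintype.equivFin (N H v₀)) hbs
              rwa [show (Fintype.equivFin (N H v₀)) (bN H v₀ s) = s from
                (Fintype.equivFin (N H v₀)).apply_symm_apply s] at h6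
            simp only [Set.mem_singleton_iff]
            exact Subtype.ext (congrArg Sum.inr hseq)
        have hle := Set.ncard_le_ncard hsub (Set.finite_singleton _)
        rw [Set.ncard_singleton] at hle
        have hadj' : H.adj u v₀ := H.symm hadj
        rw [if_pos hadj']
        exact_mod_cast hle
      · have hempty : G.commonFat y.1 y.1 = ∅ := by
          ext f
          obtain ⟨(j | s), hf⟩ := f
          · simp only [Set.mem_empty_iff_false, iff_false]
            exact fun hfm => hfm.1
          · simp only [Set.mem_empty_iff_false, iff_false]
            intro hfm
            have h1 : adj' H v₀ y.1.1 (Sum.inr s) := hfm.2.1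
            rw [hjy] at h1
            have h1' : aV jy = (bN H v₀ s).1 := by
              rcases h1 with h1 | h1
              · exact absurd h1 hune
              · exact h1
            have h5 := (bN H v₀ s).2
            rw [← h1'] at h5
            exact hadj h5
        rw [hempty, Set.ncard_empty]
        split <;> norm_num
    · -- distinct slim vertices of the part
      have hgy : g y = aV jy := by rw [hg]; simp only [if_neg hyx, hjy, Sum.elim_inl]
      rw [hgy]
      have hjne : jx ≠ jy := by
        intro hh
        apply hyx
        apply Subtype.ext; apply Subtype.ext
        rw [hjy, hjx, hh]
      have hempty : G.commonFat x.1 y.1 = ∅ := by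
        ext f
        obtain ⟨(j | s), hf⟩ := f
        · simp only [Set.mem_empty_iff_false, iff_false]
          exact fun hfm => hfm.1
        · simp only [Set.mem_empty_iff_false, iff_false]
          intro hfm
          have h1 : adj' H v₀ x.1.1 (Sum.inr s) := hfm.2.1
          have h2 : adj' H v₀ y.1.1 (Sum.inr s) := hfm.2.2
          rw [hjx] at h1
          rw [hjy] at h2
          have h1' : aV jx = (bN H v₀ s).1 := by
            rcases h1 with h1 | h1
            · exact absurd h1 hune
            · exact h1
          have h2' : aV jy = (bN H v₀ s).1 := by
            rcases h2 with h2 | h2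
            · exact absurd h2 (aV_ne_v₀ v₀ hjyne)
            · exact h2
          exact hjne (aV_inj (h1'.trans h2'.symm))
      have hiff : G.adj x.1 y.1 ↔ H.adj u (aV jy) := by
        rw [induce_adj, hjx, hjy]
        exact Iff.rfl
      rw [B_apply, hempty, Set.ncard_empty, Nat.cast_zero, sub_zero]
      by_cases hadj : H.adj u (aV jy)
      · rw [if_pos (hiff.2 hadj), if_pos hadj, abs_one]
      · rw [if_neg (fun hh => hadj (hiff.1 hh)), if_neg hadj, abs_zero]
  calc ∑ y, |G.B x y| ≤ ∑ y : G.Slim, (if H.adj u (g y) then (1 : ℝ) else 0) :=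
        Finset.sum_le_sum fun y _ => key y
    _ = ((Finset.univ.filter fun y : G.Slim => H.adj u (g y)).card : ℝ) := by
        rw [Finset.sum_boole]
    _ ≤ (k : ℝ) := by
        have hle : (Finset.univ.filter fun y : G.Slim => H.adj u (g y)).card ≤
            ({w : V | H.adj u w}).toFinset.card := by
          apply Finset.card_le_card_of_injOn g
          · intro y hy
            rw [Finset.mem_coe, Set.mem_toFinset]
            exact (Finset.mem_filter.1 (Finset.mem_coe.1 hy)).2
          · intro y _ y' _ hyy
            obtain ⟨jy, hjy, hjyne⟩ := slim1_spec H v₀ h y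
            obtain ⟨jy', hjy', hjyne'⟩ := slim1_spec H v₀ h y'
            by_cases h1 : y = x <;> by_cases h2 : y' = x
            · rw [h1, h2]
            · exfalso
              have : g y = v₀ := by rw [hg]; simp [h1]
              have h4 : g y' = aV jy' := by rw [hg]; simp only [if_neg h2, hjy', Sum.elim_inl]
              exact aV_ne_v₀ v₀ hjyne' (by rw [← h4, ← hyy, this])
            · exfalso
              have : g y' = v₀ := by rw [hg]; simp [h2]
              have h4 : g y = aV jy := by rw [hg]; simp only [if_neg h1, hjy, Sum.elim_inl]
              exact aV_ne_v₀ v₀ hjyne (by rw [← h4, hyy, this])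
            · have h3 : g y = aV jy := by rw [hg]; simp only [if_neg h1, hjy, Sum.elim_inl]
              have h4 : g y' = aV jy' := by rw [hg]; simp only [if_neg h2, hjy', Sum.elim_inl]
              rw [h3, h4] at hyy
              have : jy = jy' := aV_inj hyy
              apply Subtype.ext; apply Subtype.ext
              rw [hjy, hjy', this]
        have hdeg : ({w : V | H.adj u w}).toFinset.card = H.degree u :=
          (Set.ncard_eq_toFinset_card' _).symm
        have : (Finset.univ.filter fun y : G.Slim => H.adj u (g y)).card ≤ k := by
          rw [hdeg] at hle
          exact le_trans hle (hk u)
        exact_mod_cast this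

end Stmt3

/-- A slim graph with at least two vertices and maximum degree `k`
is `(−k)`-reducible. -/
theorem statement3 {V : Type*} [Fintype V] (H : HoffmanGraph V)
    (hslim : ∀ x : V, ¬ H.fat x) (hcard : 2 ≤ Fintype.card V)
    (k : ℕ) (hk : ∀ x : V, H.degree x ≤ k) (hk' : ∃ x : V, H.degree x = k) :
    H.AlphaReducible (-(k : ℝ)) := by
  classical
  obtain ⟨v₀, -⟩ := hk'
  constructor
  · exact Stmt3.lamMin_H_ge H hslim k hk
  · refine ⟨Stmt3.VT H v₀, inferInstance, Stmt3.H' H v₀,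
      ⟨fun x => Sum.inl (Fintype.equivFin V x),
       fun a b hab => (Fintype.equivFin V).injective (Sum.inl_injective hab),
       ?_, ?_⟩,
      Stmt3.W H v₀, Stmt3.isDecomp H v₀ hcard, ?_, ?_⟩
    · intro x y
      show H.adj x y ↔ Stmt3.adj' H v₀ (Sum.inl _) (Sum.inl _)
      rw [Stmt3.adj'_inl_inl, Stmt3.aV_eq, Stmt3.aV_eq]
    · intro x
      simp [Stmt3.H'_fat, hslim x]
    · intro i
      rcases Stmt3.fin2_cases i with rfl | rfl
      · exact Stmt3.lamMin_W0_ge H v₀ k hk _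
      · exact Stmt3.lamMin_W1_ge H v₀ k hk _
    · intro i
      rcases Stmt3.fin2_cases i with rfl | rfl
      · exact ⟨v₀, hslim v₀, (Stmt3.mem_W0_inl H v₀).2 rfl⟩
      · obtain ⟨w, hw⟩ := Fintype.exists_ne_of_one_lt_card (by omega) v₀
        exact ⟨w, hslim w, (Stmt3.mem_W1_inl H v₀).2
          (fun hh => hw ((Fintype.equivFin V).injective hh))⟩
end

section
/- For every integer r ≥ 1, the characteristic polynomial of the signed adjacency matrix of Q_{r,r,2r} is det(xI − M(Q_{r,r,2r})) = (x² + x − 1)^{2r−1} · (x² − (2r−1)x − 1). -/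
section Aux
open Polynomial Matrix

lemma myEvalCharpoly {n : Type*} [Fintype n] [DecidableEq n] (M : Matrix n n ℝ) (x : ℝ) :
    (M.charpoly).eval x = (x • (1 : Matrix n n ℝ) - M).det := by
  rw [Matrix.charpoly, _root_.eval_det, Matrix.matPolyEquiv_charmatrix]
  simp [smul_eq_diagonal_mul, Matrix.scalar]
  congr 2

lemma detAllOnes {n : Type*} [Fintype n] [DecidableEq n] (c : ℝ) (hc : c ≠ 0) :
    (c • (1 : Matrix n n ℝ) - Matrix.of (fun _ _ => (1:ℝ))).det
      = c ^ Fintype.card n * (1 - (Fintype.card n : ℝ) * c⁻¹) := by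
  have key : c • ((1 : Matrix n n ℝ) + Matrix.replicateCol Unit (fun _ => -c⁻¹) * Matrix.replicateRow Unit (fun _ => (1:ℝ)))
      = c • (1 : Matrix n n ℝ) - Matrix.of (fun _ _ => (1:ℝ)) := by
    ext i j
    simp [Matrix.mul_apply, Matrix.one_apply, mul_add]
    split_ifs <;> field_simp <;> ring
  rw [← key, Matrix.det_smul, Matrix.det_one_add_replicateCol_mul_replicateRow]
  simp [dotProduct]
  left
  ring

section Blk
variable (r : ℕ)

noncomputable def Dmat : Matrix (Fin r ⊕ Fin r) (Fin r ⊕ Fin r) ℝ := fromBlocks 1 0 0 (-1)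
noncomputable def Amat : Matrix (Fin r ⊕ Fin r) (Fin r ⊕ Fin r) ℝ := Matrix.of (fun _ _ => 1) - 1
noncomputable def Mblk : Matrix ((Fin r ⊕ Fin r) ⊕ (Fin r ⊕ Fin r))
    ((Fin r ⊕ Fin r) ⊕ (Fin r ⊕ Fin r)) ℝ := fromBlocks 0 (Dmat r) (Dmat r) (Amat r)

lemma D_mul_D : Dmat r * Dmat r = 1 := by
  simp [Dmat, fromBlocks_multiply, ← fromBlocks_one]

lemma detMblk (hr : 1 ≤ r) (x : ℝ) (hx : x ≠ 0) (ha : x^2 + x - 1 ≠ 0) :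
    (x • 1 - Mblk r).det = (x^2+x-1)^(2*r-1) * (x^2 - ((2*r-1 : ℕ):ℝ)*x - 1) := by
  set c : ℝ := x + 1 - x⁻¹ with hcdef
  have hxc : x * c = x^2 + x - 1 := by rw [hcdef]; field_simp
  have hc : c ≠ 0 := by
    intro h; exact ha (by rw [← hxc, h, mul_zero])
  have h1 : x • (1 : Matrix ((Fin r ⊕ Fin r) ⊕ (Fin r ⊕ Fin r)) _ ℝ) - Mblk r =
      fromBlocks (x • 1) (-(Dmat r)) (-(Dmat r)) (x • 1 - Amat r) := by
    rw [Mblk, ← fromBlocks_one, fromBlocks_smul]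
    simp [sub_eq_add_neg, fromBlocks_neg, fromBlocks_add]
  letI : Invertible (x • (1 : Matrix (Fin r ⊕ Fin r) (Fin r ⊕ Fin r) ℝ)) :=
    ⟨x⁻¹ • 1, by simp [smul_smul, Matrix.smul_mul, Matrix.mul_smul, inv_mul_cancel₀ hx, mul_inv_cancel₀ hx], by simp [smul_smul, Matrix.smul_mul, Matrix.mul_smul, inv_mul_cancel₀ hx, mul_inv_cancel₀ hx]⟩
  rw [h1, det_fromBlocks₁₁]
  have hinv : ⅟(x • (1 : Matrix (Fin r ⊕ Fin r) (Fin r ⊕ Fin r) ℝ)) = x⁻¹ • 1 := rfl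
  rw [hinv]
  have h2 : (x • 1 - Amat r) - (-(Dmat r)) * (x⁻¹ • 1) * (-(Dmat r)) =
      c • (1 : Matrix (Fin r ⊕ Fin r) (Fin r ⊕ Fin r) ℝ) - Matrix.of (fun _ _ => (1:ℝ)) := by
    have : (-(Dmat r)) * (x⁻¹ • (1 : Matrix (Fin r ⊕ Fin r) (Fin r ⊕ Fin r) ℝ)) * (-(Dmat r))
        = x⁻¹ • 1 := by
      simp [Matrix.mul_smul, Matrix.smul_mul, D_mul_D]
    rw [this, Amat]
    ext i j
    simp [Matrix.one_apply, hcdef]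
    split_ifs <;> ring
  rw [h2, detAllOnes c hc, Matrix.det_smul, Matrix.det_one]
  have hcard : Fintype.card (Fin r ⊕ Fin r) = r + r := by simp
  rw [hcard]
  obtain ⟨k, hk⟩ : ∃ k, r + r = k + 1 := ⟨r + r - 1, by omega⟩
  have hk2 : 2 * r - 1 = k := by omega
  have hkc : ((2*r-1 : ℕ):ℝ) = (k : ℝ) := by rw [hk2]
  have hrr : ((r + r : ℕ) : ℝ) = (k : ℝ) + 1 := by rw [hk]; push_cast; ring
  rw [hkc, hk2, hk]
  push_cast
  have lhs : ∀ d : ℝ, d ≠ 0 →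
      x ^ (k+1) * 1 * (d ^ (k+1) * (1 - ((k:ℝ)+1) * d⁻¹)) = (x*d)^k * (x*d - ((k:ℝ)+1)*x) := by
    intro d hd
    field_simp
    ring
  rw [lhs c hc, hxc]
  ring
end Blk

def eEquiv (r : ℕ) : ((Fin r ⊕ Fin r) ⊕ (Fin r ⊕ Fin r)) ≃ (Fin r ⊕ Fin r ⊕ Fin (2*r)) :=
  (Equiv.sumCongr (Equiv.refl (Fin r ⊕ Fin r))
    (finSumFinEquiv.trans (finCongr (two_mul r).symm))).trans
    (Equiv.sumAssoc (Fin r) (Fin r) (Fin (2*r)))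

open Classical in
lemma M_apply {V : Type*} (S : EdgeSignedGraph V) (x y : V) :
    S.M x y = if S.pos x y then (1:ℝ) else if S.neg x y then -1 else 0 := by
  by_cases hp : S.pos x y <;> by_cases hn : S.neg x y <;>
    simp [EdgeSignedGraph.M, hp, hn]

lemma exfin_iff {R N : ℕ} (m n : ℕ) (hm : m < R) (hn : n < N) (P : ℕ → ℕ → Prop) :
    (∃ a : Fin R, m = ↑a ∧ ∃ x : Fin N, n = ↑x ∧ P ↑x ↑a) ↔ P n m := by
  constructor
  · rintro ⟨a, ha, x, hx, hP⟩
    rw [← hx, ← ha] at hP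
    exact hP
  · intro h
    exact ⟨⟨m, hm⟩, rfl, ⟨n, hn⟩, rfl, h⟩

set_option maxRecDepth 8000 in
lemma Mblk_eq (r : ℕ) (a b : (Fin r ⊕ Fin r) ⊕ (Fin r ⊕ Fin r)) :
    Mblk r a b = (Q r r (2*r)).M (eEquiv r a) (eEquiv r b) := by
  rcases a with (i|i)|(i|i) <;> rcases b with (j|j)|(j|j) <;>
    (rw [M_apply]; simp [Q, Mblk, eEquiv, Dmat, Amat, Matrix.one_apply, Fin.ext_iff])
  case inl.inl.inr.inl =>
    simp only [exfin_iff (R := r) (N := 2*r) (↑i) (↑j) (by omega) (by omega)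
      (fun x a => x = a)]
    try split_ifs <;> first | rfl | (exfalso; omega) | norm_num
  case inl.inl.inr.inr =>
    intro a ha b hb; have := a.isLt; omega
    try split_ifs <;> first | rfl | (exfalso; omega) | norm_num
  case inl.inr.inr.inl =>
    intro a ha b hb; have := a.isLt; omega
    try split_ifs <;> first | rfl | (exfalso; omega) | norm_num
  case inl.inr.inr.inr =>
    simp only [exfin_iff (R := r) (N := 2*r) (↑i) (↑j + r) (by omega) (by omega)
      (fun x a => x = r + a)]
    try split_ifs <;> first | rfl | (exfalso; omega) | norm_num
  case inr.inl.inl.inl =>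
    simp only [exfin_iff (R := r) (N := 2*r) (↑j) (↑i) (by omega) (by omega)
      (fun x a => x = a)]
    try split_ifs <;> first | rfl | (exfalso; omega) | norm_num
  case inr.inl.inl.inr =>
    intro a ha b hb; have := a.isLt; omega
    try split_ifs <;> first | rfl | (exfalso; omega) | norm_num
  case inr.inl.inr.inl =>
    simp only [exfin_iff (R := 2*r) (N := 2*r) (↑i) (↑j) (by omega) (by omega)
      (fun x a => ¬ a = x)]
    try split_ifs <;> first | rfl | (exfalso; omega) | norm_num
  case inr.inl.inr.inr =>
    simp only [exfin_iff (R := 2*r) (N := 2*r) (↑i) (↑j + r) (by omega) (by omega)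
      (fun x a => ¬ a = x)]
    try split_ifs <;> first | rfl | (exfalso; omega) | norm_num
    have := i.isLt; have := j.isLt; omega
  case inr.inr.inl.inl =>
    intro a ha b hb; have := a.isLt; omega
    try split_ifs <;> first | rfl | (exfalso; omega) | norm_num
  case inr.inr.inl.inr =>
    simp only [exfin_iff (R := r) (N := 2*r) (↑j) (↑i + r) (by omega) (by omega)
      (fun x a => x = r + a)]
    try split_ifs <;> first | rfl | (exfalso; omega) | norm_num
  case inr.inr.inr.inl =>
    simp only [exfin_iff (R := 2*r) (N := 2*r) (↑i + r) (↑j) (by omega) (by omega)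
      (fun x a => ¬ a = x)]
    try split_ifs <;> first | rfl | (exfalso; omega) | norm_num
    have := i.isLt; have := j.isLt; omega
  case inr.inr.inr.inr =>
    simp only [exfin_iff (R := 2*r) (N := 2*r) (↑i + r) (↑j + r) (by omega) (by omega)
      (fun x a => ¬ a = x)]
    try split_ifs <;> first | rfl | (exfalso; omega) | norm_num

end Aux

/-- For `r ≥ 1`, the characteristic polynomial of the signed
adjacency matrix of `Q_{r,r,2r}` is `(x² + x − 1)^(2r−1) · (x² − (2r−1)x − 1)`. -/
theorem statement7 (r : ℕ) (hr : 1 ≤ r) :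
    (Q r r (2 * r)).M.charpoly =
      (Polynomial.X ^ 2 + Polynomial.X - 1) ^ (2 * r - 1) *
        (Polynomial.X ^ 2 - Polynomial.C (((2 * r - 1 : ℕ) : ℝ)) * Polynomial.X - 1) := by
  classical
  have hM : (Q r r (2*r)).M = Matrix.reindex (eEquiv r) (eEquiv r) (Mblk r) := by
    ext a b
    rw [Matrix.reindex_apply, Matrix.submatrix_apply, Mblk_eq, Equiv.apply_symm_apply,
      Equiv.apply_symm_apply]
  rw [hM, Matrix.charpoly_reindex]
  apply Polynomial.eq_of_infinite_eval_eq
  have hq : (Polynomial.X^2 + Polynomial.X - 1 : Polynomial ℝ) ≠ 0 := by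
    intro h
    have := congrArg (fun q => Polynomial.coeff q 2) h
    simp [Polynomial.coeff_one, Polynomial.coeff_X] at this
  have hfin : {x : ℝ | x = 0 ∨ x^2 + x - 1 = 0}.Finite := by
    have hsub : {x : ℝ | x = 0 ∨ x^2 + x - 1 = 0} ⊆
        {x : ℝ | (Polynomial.X * (Polynomial.X^2 + Polynomial.X - 1) : Polynomial ℝ).IsRoot x} := by
      intro x hx
      rcases hx with h | h <;> simp [Polynomial.IsRoot, h]
    exact (Polynomial.finite_setOf_isRoot
      (mul_ne_zero Polynomial.X_ne_zero hq)).subset hsub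
  have hinf : {x : ℝ | x ≠ 0 ∧ x^2 + x - 1 ≠ 0}.Infinite := by
    have : {x : ℝ | x ≠ 0 ∧ x^2 + x - 1 ≠ 0} = {x : ℝ | x = 0 ∨ x^2 + x - 1 = 0}ᶜ := by
      ext x; simp [not_or]
    rw [this]
    exact hfin.infinite_compl
  apply hinf.mono
  rintro x ⟨hx, ha⟩
  simp only [Set.mem_setOf_eq, myEvalCharpoly, Polynomial.eval_mul, Polynomial.eval_pow,
    Polynomial.eval_sub, Polynomial.eval_add, Polynomial.eval_one, Polynomial.eval_X,
    Polynomial.eval_C]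
  exact detMblk r hr x hx ha
end

section
/- For every integer r ≥ 1, the smallest eigenvalue of the signed adjacency matrix of Q_{r,r,2r} equals −τ, where τ = (1+√5)/2 is the golden ratio. -/
section Aux

open Matrix

variable {p q n : ℕ}

lemma QM_ll (i i' : Fin p) : (Q p q n).M (Sum.inl i) (Sum.inl i') = 0 := by
  simp [Q, EdgeSignedGraph.M]

lemma QM_lm (i : Fin p) (j : Fin q) :
    (Q p q n).M (Sum.inl i) (Sum.inr (Sum.inl j)) = 0 := by
  simp [Q, EdgeSignedGraph.M]

lemma QM_lr (i : Fin p) (k : Fin n) :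
    (Q p q n).M (Sum.inl i) (Sum.inr (Sum.inr k)) =
      if (k : ℕ) = (i : ℕ) then 1 else 0 := by
  simp [Q, EdgeSignedGraph.M]

lemma QM_ml (j : Fin q) (i : Fin p) :
    (Q p q n).M (Sum.inr (Sum.inl j)) (Sum.inl i) = 0 := by
  simp [Q, EdgeSignedGraph.M]

lemma QM_mm (j j' : Fin q) :
    (Q p q n).M (Sum.inr (Sum.inl j)) (Sum.inr (Sum.inl j')) = 0 := by
  simp [Q, EdgeSignedGraph.M]

lemma QM_mr (j : Fin q) (k : Fin n) :
    (Q p q n).M (Sum.inr (Sum.inl j)) (Sum.inr (Sum.inr k)) =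
      if (k : ℕ) = p + (j : ℕ) then -1 else 0 := by
  simp [Q, EdgeSignedGraph.M]

lemma QM_rl (k : Fin n) (i : Fin p) :
    (Q p q n).M (Sum.inr (Sum.inr k)) (Sum.inl i) =
      if (k : ℕ) = (i : ℕ) then 1 else 0 := by
  simp [Q, EdgeSignedGraph.M]

lemma QM_rm (k : Fin n) (j : Fin q) :
    (Q p q n).M (Sum.inr (Sum.inr k)) (Sum.inr (Sum.inl j)) =
      if (k : ℕ) = p + (j : ℕ) then -1 else 0 := by
  simp [Q, EdgeSignedGraph.M]

lemma QM_rr (k l : Fin n) :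
    (Q p q n).M (Sum.inr (Sum.inr k)) (Sum.inr (Sum.inr l)) =
      if k = l then 0 else 1 := by
  by_cases h : k = l <;> simp [Q, EdgeSignedGraph.M, h]

end Aux

section Aux2
open Matrix

lemma sum_ite_fin {m : ℕ} (c : ℕ) (f : Fin m → ℝ) :
    ∑ k : Fin m, (if (k : ℕ) = c then f k else 0) = if h : c < m then f ⟨c, h⟩ else 0 := by
  by_cases h : c < m
  · rw [dif_pos h, Finset.sum_eq_single (⟨c, h⟩ : Fin m)]
    · simp
    · intro b _ hb
      rw [if_neg]; intro hc; exact hb (Fin.ext hc)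
    · simp
  · rw [dif_neg h]
    apply Finset.sum_eq_zero; intro b _
    rw [if_neg]; intro hc; exact h (hc ▸ b.isLt)

lemma sum_ite_fin' {m : ℕ} (c : ℕ) (f : Fin m → ℝ) :
    ∑ k : Fin m, (if c = (k : ℕ) then f k else 0) = if h : c < m then f ⟨c, h⟩ else 0 := by
  rw [← sum_ite_fin c f]
  apply Finset.sum_congr rfl; intro k _
  by_cases h : (k : ℕ) = c
  · rw [if_pos h, if_pos h.symm]
  · rw [if_neg h, if_neg (fun hc => h hc.symm)]

lemma sum_ite_fin_add {m : ℕ} (c a : ℕ) (f : Fin m → ℝ) :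
    ∑ j : Fin m, (if c = a + (j : ℕ) then f j else 0) =
      if h : a ≤ c ∧ c - a < m then f ⟨c - a, h.2⟩ else 0 := by
  by_cases h : a ≤ c ∧ c - a < m
  · rw [dif_pos h, Finset.sum_eq_single (⟨c - a, h.2⟩ : Fin m)]
    · rw [if_pos (show c = a + (c - a) by omega)]
    · intro b _ hb
      rw [if_neg]; intro hc
      exact hb (Fin.ext (show (b : ℕ) = c - a by omega))
    · simp
  · rw [dif_neg h]
    apply Finset.sum_eq_zero; intro b _
    rw [if_neg]; intro hc
    have := b.isLt; omega

variable {r : ℕ}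

lemma rowP (v : Fin r ⊕ Fin r ⊕ Fin (2 * r) → ℝ) (i : Fin r) :
    ((Q r r (2 * r)).M.mulVec v) (Sum.inl i) =
      v (Sum.inr (Sum.inr ⟨(i : ℕ), by have := i.isLt; omega⟩)) := by
  unfold Matrix.mulVec dotProduct
  rw [Fintype.sum_sum_type, Fintype.sum_sum_type]
  simp only [QM_ll, QM_lm, QM_lr, zero_mul, Finset.sum_const_zero, ite_mul, one_mul,
    zero_add, add_zero]
  rw [sum_ite_fin (i : ℕ) (fun k => v (Sum.inr (Sum.inr k)))]
  rw [dif_pos (by have := i.isLt; omega : (i : ℕ) < 2 * r)]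

lemma rowN (v : Fin r ⊕ Fin r ⊕ Fin (2 * r) → ℝ) (j : Fin r) :
    ((Q r r (2 * r)).M.mulVec v) (Sum.inr (Sum.inl j)) =
      -v (Sum.inr (Sum.inr ⟨r + (j : ℕ), by have := j.isLt; omega⟩)) := by
  unfold Matrix.mulVec dotProduct
  rw [Fintype.sum_sum_type, Fintype.sum_sum_type]
  simp only [QM_ml, QM_mm, QM_mr, zero_mul, Finset.sum_const_zero, ite_mul, neg_one_mul,
    zero_add, add_zero]
  rw [show (∑ k : Fin (2 * r), if (k : ℕ) = r + (j : ℕ) then -v (Sum.inr (Sum.inr k)) else 0)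
      = ∑ k : Fin (2 * r),
          (if (k : ℕ) = r + (j : ℕ) then (fun k' => -v (Sum.inr (Sum.inr k'))) k else 0)
    from rfl,
    sum_ite_fin (r + (j : ℕ)) (fun k' => -v (Sum.inr (Sum.inr k')))]
  rw [dif_pos (by have := j.isLt; omega : r + (j : ℕ) < 2 * r)]

lemma rowC (v : Fin r ⊕ Fin r ⊕ Fin (2 * r) → ℝ) (k : Fin (2 * r)) :
    ((Q r r (2 * r)).M.mulVec v) (Sum.inr (Sum.inr k)) =
      (if h : (k : ℕ) < r then v (Sum.inl ⟨(k : ℕ), h⟩) else 0)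
      + (if h : r ≤ (k : ℕ) then -v (Sum.inr (Sum.inl ⟨(k : ℕ) - r, by have := k.isLt; omega⟩))
          else 0)
      + ((∑ l : Fin (2 * r), v (Sum.inr (Sum.inr l))) - v (Sum.inr (Sum.inr k))) := by
  have hk := k.isLt
  unfold Matrix.mulVec dotProduct
  rw [Fintype.sum_sum_type, Fintype.sum_sum_type]
  simp only [QM_rl, QM_rm, QM_rr, ite_mul, one_mul, neg_one_mul, zero_mul]
  have h1 : ∑ i : Fin r, (if (k : ℕ) = (i : ℕ) then v (Sum.inl i) else 0)
      = if h : (k : ℕ) < r then v (Sum.inl ⟨(k : ℕ), h⟩) else 0 :=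
    sum_ite_fin' (k : ℕ) (fun i => v (Sum.inl i))
  have h2 : ∑ j : Fin r, (if (k : ℕ) = r + (j : ℕ) then -v (Sum.inr (Sum.inl j)) else 0)
      = if h : r ≤ (k : ℕ)
          then -v (Sum.inr (Sum.inl ⟨(k : ℕ) - r, by omega⟩)) else 0 := by
    rw [show (∑ j : Fin r, if (k : ℕ) = r + (j : ℕ) then -v (Sum.inr (Sum.inl j)) else 0)
        = ∑ j : Fin r,
            (if (k : ℕ) = r + (j : ℕ) then (fun j' => -v (Sum.inr (Sum.inl j'))) j else 0)
      from rfl,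
      sum_ite_fin_add (k : ℕ) r (fun j' => -v (Sum.inr (Sum.inl j')))]
    by_cases h : r ≤ (k : ℕ)
    · rw [dif_pos ⟨h, by omega⟩, dif_pos h]
    · rw [dif_neg (by omega), dif_neg h]
  have h3 : ∑ l : Fin (2 * r), (if k = l then 0 else v (Sum.inr (Sum.inr l)))
      = (∑ l : Fin (2 * r), v (Sum.inr (Sum.inr l))) - v (Sum.inr (Sum.inr k)) := by
    have step : ∀ l : Fin (2 * r),
        (if k = l then 0 else v (Sum.inr (Sum.inr l)))
          = v (Sum.inr (Sum.inr l)) - (if l = k then v (Sum.inr (Sum.inr l)) else 0) := by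
      intro l
      by_cases h : k = l
      · rw [if_pos h, if_pos h.symm]; ring
      · rw [if_neg h, if_neg (fun hc => h hc.symm)]; ring
    rw [Finset.sum_congr rfl (fun l _ => step l), Finset.sum_sub_distrib,
      Finset.sum_ite_eq' Finset.univ k (fun l => v (Sum.inr (Sum.inr l)))]
    simp
  rw [h1, h2, h3]
  ring

end Aux2

section Aux3
open Matrix

/-- Eigenvector of `Q r r (2r)` for an eigenvalue `L` with `L² + L - 1 = 0`. -/
noncomputable def qVec (r : ℕ) (L : ℝ) : Fin r ⊕ Fin r ⊕ Fin (2 * r) → ℝ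
  | Sum.inl i => if (i : ℕ) = 0 then 1 else 0
  | Sum.inr (Sum.inl j) => if (j : ℕ) = 0 then 1 else 0
  | Sum.inr (Sum.inr k) => if (k : ℕ) = 0 then L else if (k : ℕ) = r then -L else 0

lemma qVec_sum (r : ℕ) (hr : 1 ≤ r) (L : ℝ) :
    ∑ l : Fin (2 * r), qVec r L (Sum.inr (Sum.inr l)) = 0 := by
  have step : ∀ l : Fin (2 * r), qVec r L (Sum.inr (Sum.inr l)) =
      (if (l : ℕ) = 0 then (fun _ : Fin (2 * r) => L) l else 0)
      + (if (l : ℕ) = r then (fun _ : Fin (2 * r) => -L) l else 0) := by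
    intro l
    simp only [qVec]
    by_cases h0 : (l : ℕ) = 0
    · rw [if_pos h0, if_pos h0, if_neg (by omega), add_zero]
    · rw [if_neg h0, if_neg h0, zero_add]
  rw [Finset.sum_congr rfl (fun l _ => step l), Finset.sum_add_distrib,
    sum_ite_fin 0 _, sum_ite_fin r _, dif_pos (by omega : 0 < 2 * r),
    dif_pos (by omega : r < 2 * r)]
  ring

lemma qVec_ne (r : ℕ) (hr : 1 ≤ r) (L : ℝ) : qVec r L ≠ 0 := by
  intro h
  have := congrFun h (Sum.inl ⟨0, hr⟩)
  simp [qVec] at this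

lemma qVec_eig (r : ℕ) (hr : 1 ≤ r) (L : ℝ) (hL : L ^ 2 + L - 1 = 0) :
    (Q r r (2 * r)).M.mulVec (qVec r L) = L • qVec r L := by
  funext x
  match x with
  | Sum.inl i =>
    rw [rowP]
    simp only [Pi.smul_apply, smul_eq_mul, qVec]
    by_cases h0 : (i : ℕ) = 0
    · rw [if_pos h0, if_pos h0, mul_one]
    · rw [if_neg h0, if_neg (show ¬ (i : ℕ) = r by have := i.isLt; omega), if_neg h0, mul_zero]
  | Sum.inr (Sum.inl j) =>
    rw [rowN]
    simp only [Pi.smul_apply, smul_eq_mul, qVec]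
    by_cases h0 : (j : ℕ) = 0
    · rw [if_neg (show ¬ r + (j : ℕ) = 0 by omega), if_pos (show r + (j : ℕ) = r by omega),
        if_pos h0, mul_one, neg_neg]
    · rw [if_neg (show ¬ r + (j : ℕ) = 0 by omega), if_neg (show ¬ r + (j : ℕ) = r by omega),
        if_neg h0, mul_zero, neg_zero]
  | Sum.inr (Sum.inr k) =>
    have hk := k.isLt
    rw [rowC, qVec_sum r hr L]
    simp only [Pi.smul_apply, smul_eq_mul, qVec]
    by_cases h0 : (k : ℕ) = 0
    · rw [dif_pos (show (k : ℕ) < r by omega), dif_neg (show ¬ r ≤ (k : ℕ) by omega),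
        if_pos h0, if_pos h0]
      linear_combination -hL
    · by_cases hkr : (k : ℕ) = r
      · rw [dif_neg (by omega), dif_pos (show r ≤ (k : ℕ) by omega),
          if_pos (show (k : ℕ) - r = 0 by omega), if_neg h0, if_pos hkr]
        linear_combination hL
      · by_cases hklt : (k : ℕ) < r
        · rw [dif_pos hklt, dif_neg (by omega), if_neg h0, if_neg h0, if_neg hkr]
          ring
        · rw [dif_neg hklt, dif_pos (by omega), if_neg (show ¬ (k : ℕ) - r = 0 by omega),
            if_neg h0, if_neg hkr]
          ring

end Aux3

section Aux4
open Matrix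

lemma qLower (r : ℕ) (hr : 1 ≤ r) (t : ℝ) (v : Fin r ⊕ Fin r ⊕ Fin (2 * r) → ℝ)
    (hv0 : v ≠ 0) (hvt : (Q r r (2 * r)).M.mulVec v = t • v) :
    -((1 + Real.sqrt 5) / 2) ≤ t := by
  by_contra hlt
  push_neg at hlt
  have hs5 : Real.sqrt 5 ^ 2 = 5 := Real.sq_sqrt (by norm_num)
  have hs2 : 2 < Real.sqrt 5 := by nlinarith [Real.sqrt_nonneg 5]
  have htneg : t < -1 := by nlinarith
  have ht0 : t ≠ 0 := by intro h; rw [h] at htneg; linarith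
  have hA : 0 < t ^ 2 + t - 1 := by
    nlinarith [mul_pos (show (0:ℝ) < -(2 * t + 1 + Real.sqrt 5) by nlinarith)
      (show (0:ℝ) < -(2 * t + 1 - Real.sqrt 5) by nlinarith)]
  have hP : ∀ i : Fin r,
      v (Sum.inr (Sum.inr ⟨(i : ℕ), by have := i.isLt; omega⟩)) = t * v (Sum.inl i) := by
    intro i
    have h := congrFun hvt (Sum.inl i)
    rw [rowP] at h
    simpa using h
  have hN : ∀ j : Fin r,
      -v (Sum.inr (Sum.inr ⟨r + (j : ℕ), by have := j.isLt; omega⟩))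
        = t * v (Sum.inr (Sum.inl j)) := by
    intro j
    have h := congrFun hvt (Sum.inr (Sum.inl j))
    rw [rowN] at h
    simpa using h
  have key : ∀ k : Fin (2 * r),
      (t ^ 2 + t - 1) * v (Sum.inr (Sum.inr k))
        = t * ∑ l : Fin (2 * r), v (Sum.inr (Sum.inr l)) := by
    intro k
    have hk := k.isLt
    have hCk := congrFun hvt (Sum.inr (Sum.inr k))
    rw [rowC] at hCk
    simp only [Pi.smul_apply, smul_eq_mul] at hCk
    by_cases h : (k : ℕ) < r
    · rw [dif_pos h, dif_neg (by omega)] at hCk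
      have e2' : v (Sum.inr (Sum.inr k)) = t * v (Sum.inl ⟨(k : ℕ), h⟩) := hP ⟨(k : ℕ), h⟩
      linear_combination (-t) * hCk - e2'
    · rw [dif_neg h, dif_pos (by omega)] at hCk
      have e2' : -v (Sum.inr (Sum.inr ⟨r + ((k : ℕ) - r), by omega⟩))
          = t * v (Sum.inr (Sum.inl ⟨(k : ℕ) - r, by omega⟩)) := hN ⟨(k : ℕ) - r, by omega⟩
      have hidx : (⟨r + ((k : ℕ) - r), by omega⟩ : Fin (2 * r)) = k :=
        Fin.ext (show r + ((k : ℕ) - r) = (k : ℕ) by omega)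
      rw [hidx] at e2'
      linear_combination (-t) * hCk + e2'
  set S := ∑ l : Fin (2 * r), v (Sum.inr (Sum.inr l)) with hSdef
  have hsum : (t ^ 2 + t - 1) * S = (2 * r : ℝ) * (t * S) := by
    calc (t ^ 2 + t - 1) * S
        = ∑ k : Fin (2 * r), (t ^ 2 + t - 1) * v (Sum.inr (Sum.inr k)) := by
          rw [hSdef, Finset.mul_sum]
      _ = ∑ _k : Fin (2 * r), t * S := Finset.sum_congr rfl (fun k _ => key k)
      _ = (2 * r : ℝ) * (t * S) := by
          rw [Finset.sum_const, Finset.card_univ, Fintype.card_fin, nsmul_eq_mul]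
          push_cast; ring
  have hS0 : S = 0 := by
    by_contra hS0
    have h2r : (2 : ℝ) ≤ (2 * r : ℝ) := by
      have : (1 : ℝ) ≤ (r : ℝ) := by exact_mod_cast hr
      push_cast; linarith
    have hEq : t ^ 2 + t - 1 = (2 * r : ℝ) * t :=
      mul_right_cancel₀ hS0 (by rw [hsum]; ring)
    nlinarith
  have hc0 : ∀ k : Fin (2 * r), v (Sum.inr (Sum.inr k)) = 0 := by
    intro k
    have h := key k
    rw [hS0, mul_zero] at h
    exact (mul_eq_zero.mp h).resolve_left (ne_of_gt hA)
  apply hv0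
  funext x
  show v x = 0
  match x with
  | Sum.inl i =>
    have h := hP i
    rw [hc0] at h
    exact (mul_eq_zero.mp h.symm).resolve_left ht0
  | Sum.inr (Sum.inl j) =>
    have h := hN j
    rw [hc0, neg_zero] at h
    exact (mul_eq_zero.mp h.symm).resolve_left ht0
  | Sum.inr (Sum.inr k) => exact hc0 k

end Aux4

theorem statement8' (r : ℕ) (hr : 1 ≤ r) :
    minEig (Q r r (2 * r)).M = -((1 + Real.sqrt 5) / 2) := by
  have hs5 : Real.sqrt 5 ^ 2 = 5 := Real.sq_sqrt (by norm_num)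
  set L : ℝ := -((1 + Real.sqrt 5) / 2) with hL
  have hLquad : L ^ 2 + L - 1 = 0 := by
    rw [hL]; linear_combination (1 / 4 : ℝ) * hs5
  have hmem : L ∈ {t : ℝ | ∃ w : Fin r ⊕ Fin r ⊕ Fin (2 * r) → ℝ,
      w ≠ 0 ∧ (Q r r (2 * r)).M.mulVec w = t • w} :=
    ⟨qVec r L, qVec_ne r hr L, qVec_eig r hr L hLquad⟩
  have hlb : ∀ x ∈ {t : ℝ | ∃ w : Fin r ⊕ Fin r ⊕ Fin (2 * r) → ℝ,
      w ≠ 0 ∧ (Q r r (2 * r)).M.mulVec w = t • w}, L ≤ x := by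
    rintro x ⟨w, h1, h2⟩
    exact qLower r hr x w h1 h2
  unfold minEig
  exact le_antisymm (csInf_le ⟨L, hlb⟩ hmem) (le_csInf ⟨L, hmem⟩ hlb)

/-- For `r ≥ 1`, the smallest eigenvalue of the signed adjacency
matrix of `Q_{r,r,2r}` equals `−τ`, where `τ = (1+√5)/2` is the golden ratio. -/
theorem statement8 (r : ℕ) (hr : 1 ≤ r) :
    minEig (Q r r (2 * r)).M = -((1 + Real.sqrt 5) / 2) := by
  exact statement8' r hr
end
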